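/- arXiv:math/0611361 — 11 statements merged into one kernel-verified Lean document; each statement's English description precedes it below -/
import Mathlib

section
/- Define c_1 = 1 and, for 2^j ≤ n < 2^{j+1}, set c_n = 2^{-2j} if j is even and c_n = 2^{-3j} if j is odd. Then the sequence {c_n} is a nonnegative null sequence belonging to NBVS: there is a constant K such that ∑_{k=m}^{2m}|c_k - c_{k+1}| ≤ K(c_m + c_{2m}) for all m ≥ 1. -/
open Filter

theorem example_seq_in_nbvs (c : ℕ → ℝ)
    (hc : ∀ j n : ℕ, 2 ^ j ≤ n → n < 2 ^ (j + 1) →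
      c n = if j % 2 = 0 then ((2 : ℝ) ^ (2 * j))⁻¹ else ((2 : ℝ) ^ (3 * j))⁻¹) :
    (∀ n : ℕ, 1 ≤ n → 0 ≤ c n) ∧
    Tendsto c atTop (nhds 0) ∧
    ∃ K : ℝ, 0 < K ∧ ∀ m : ℕ, 1 ≤ m →
      ∑ k ∈ Finset.Icc m (2 * m), |c k - c (k + 1)| ≤ K * (c m + c (2 * m)) := by
  set v : ℕ → ℝ := fun j => if j % 2 = 0 then ((2 : ℝ) ^ (2 * j))⁻¹ else ((2 : ℝ) ^ (3 * j))⁻¹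
    with hv
  have hvpos : ∀ j, 0 < v j := by
    intro j
    simp only [hv]
    split <;> positivity
  have hcv : ∀ n : ℕ, 1 ≤ n → c n = v (Nat.log 2 n) := by
    intro n hn
    exact hc _ n (Nat.pow_log_le_self 2 (by omega)) (Nat.lt_pow_succ_log_self (by norm_num) n)
  have hlog : ∀ j n : ℕ, 2 ^ j ≤ n → n < 2 ^ (j + 1) → Nat.log 2 n = j := by
    intro j n h1 h2
    exact Nat.log_eq_of_pow_le_of_lt_pow h1 h2
  have hvle : ∀ j, v j ≤ ((2 : ℝ) ^ j)⁻¹ := by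
    intro j
    simp only [hv]
    split <;>
    · apply inv_anti₀ (by positivity)
      exact pow_le_pow_right₀ (by norm_num) (by omega)
  refine ⟨?_, ?_, ?_⟩
  · intro n hn
    rw [hcv n hn]
    exact (hvpos _).le
  · apply squeeze_zero' (g := fun n : ℕ => (2 : ℝ) / n)
    · filter_upwards [eventually_ge_atTop 1] with n hn
      rw [hcv n hn]
      exact (hvpos _).le
    · filter_upwards [eventually_ge_atTop 1] with n hn
      rw [hcv n hn]
      refine le_trans (hvle _) ?_
      have h2 : (n : ℝ) < 2 ^ (Nat.log 2 n + 1) := by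
        exact_mod_cast Nat.lt_pow_succ_log_self (by norm_num) n
      have hn0 : (0 : ℝ) < n := by exact_mod_cast hn
      rw [inv_eq_one_div, div_le_div_iff₀ (by positivity) hn0]
      rw [pow_succ] at h2
      nlinarith
    · exact tendsto_const_div_atTop_nhds_zero_nat 2
  · refine ⟨1, one_pos, ?_⟩
    intro m hm
    set j := Nat.log 2 m with hj
    have hjm : 2 ^ j ≤ m := Nat.pow_log_le_self 2 (by omega)
    have hjm' : m < 2 ^ (j + 1) := Nat.lt_pow_succ_log_self (by norm_num) m
    have hterm : ∀ k ∈ Finset.Icc m (2 * m),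
        |c k - c (k + 1)| = if k = 2 ^ (j + 1) - 1 then |v j - v (j + 1)| else 0 := by
      intro k hk
      simp only [Finset.mem_Icc] at hk
      by_cases h1 : k + 1 < 2 ^ (j + 1)
      · rw [if_neg (by omega)]
        rw [hcv k (by omega), hcv (k + 1) (by omega),
          hlog j k (hjm.trans hk.1) (by omega), hlog j (k + 1) (by omega) h1]
        simp
      · by_cases h2 : k + 1 = 2 ^ (j + 1)
        · rw [if_pos (by omega)]
          rw [hcv k (by omega), hcv (k + 1) (by omega),
            hlog j k (hjm.trans hk.1) (by omega),
            hlog (j + 1) (k + 1) (by omega) (by rw [pow_succ]; omega)]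
        · rw [if_neg (by omega)]
          have hk2 : 2 ^ (j + 1) ≤ k := by omega
          have hub : k + 1 < 2 ^ (j + 2) := by
            have : 2 * m < 2 * 2 ^ (j + 1) := by omega
            rw [pow_succ 2 (j + 1)]
            omega
          rw [hcv k (by omega), hcv (k + 1) (by omega),
            hlog (j + 1) k hk2 (by omega), hlog (j + 1) (k + 1) (by omega) hub]
          simp
    rw [Finset.sum_congr rfl hterm, Finset.sum_ite_eq' (Finset.Icc m (2 * m))]
    have hcm : c m = v j := by rw [hcv m hm]
    have hc2m : c (2 * m) = v (j + 1) := by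
      rw [hcv (2 * m) (by omega), hlog (j + 1) (2 * m) (by rw [pow_succ]; omega)
        (by rw [pow_succ 2 (j + 1)]; omega)]
    have habs : |v j - v (j + 1)| ≤ v j + v (j + 1) := by
      refine (abs_sub _ _).trans ?_
      rw [abs_of_nonneg (hvpos j).le, abs_of_nonneg (hvpos (j + 1)).le]
    rw [hcm, hc2m, one_mul]
    split
    · exact habs
    · positivity
end

section
/- Define c_1 = 1 and, for 2^j ≤ n < 2^{j+1}, set c_n = 2^{-2j} if j is even and c_n = 2^{-3j} if j is odd. Then {c_n} is not in GBVS: there is no constant K such that ∑_{k=m}^{2m}|c_k - c_{k+1}| ≤ K·c_m holds for all m ≥ 1. In fact, for m = 2^{2n+1} one has ∑_{k=m}^{2m}|Δc_k| ≥ m·c_m/8. -/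
theorem example_seq_not_in_gbvs (c : ℕ → ℝ)
    (hc : ∀ j n : ℕ, 2 ^ j ≤ n → n < 2 ^ (j + 1) →
      c n = if j % 2 = 0 then ((2 : ℝ) ^ (2 * j))⁻¹ else ((2 : ℝ) ^ (3 * j))⁻¹) :
    (¬ ∃ K : ℝ, ∀ m : ℕ, 1 ≤ m →
      ∑ k ∈ Finset.Icc m (2 * m), |c k - c (k + 1)| ≤ K * c m) ∧
    (∀ n : ℕ,
      ((2 ^ (2 * n + 1) : ℕ) : ℝ) * c (2 ^ (2 * n + 1)) / 8 ≤
        ∑ k ∈ Finset.Icc (2 ^ (2 * n + 1)) (2 * 2 ^ (2 * n + 1)), |c k - c (k + 1)|) := by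
  have key : ∀ n : ℕ,
      ((2 ^ (2 * n + 1) : ℕ) : ℝ) * c (2 ^ (2 * n + 1)) / 8 ≤
        ∑ k ∈ Finset.Icc (2 ^ (2 * n + 1)) (2 * 2 ^ (2 * n + 1)), |c k - c (k + 1)| := by
    intro n
    set m : ℕ := 2 ^ (2 * n + 1) with hm
    have hm2 : 2 * m = 2 ^ (2 * n + 2) := by rw [hm, ← pow_succ']
    have hmpos : 1 ≤ m := Nat.one_le_two_pow
    have hodd : ∀ k, m ≤ k → k < 2 * m → c k = ((2 : ℝ) ^ (3 * (2 * n + 1)))⁻¹ := by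
      intro k h1 h2
      rw [hc (2 * n + 1) k h1 (by rw [← hm2]; omega)]
      have : (2 * n + 1) % 2 = 1 := by omega
      simp [this]
    have heven : ∀ k, 2 * m ≤ k → k < 2 ^ (2 * n + 3) →
        c k = ((2 : ℝ) ^ (2 * (2 * n + 2)))⁻¹ := by
      intro k h1 h2
      rw [hc (2 * n + 2) k (by omega) h2]
      have : (2 * n + 2) % 2 = 0 := by omega
      simp [this]
    have hlt3 : 2 * m + 1 < 2 ^ (2 * n + 3) := by
      have : 2 ^ (2 * n + 3) = 2 * (2 * m) := by rw [hm2, pow_succ]; ring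
      omega
    have hsum : ∑ k ∈ Finset.Icc m (2 * m), |c k - c (k + 1)|
        = |c (2 * m - 1) - c (2 * m)| := by
      rw [Finset.sum_eq_single_of_mem (2 * m - 1)
        (by rw [Finset.mem_Icc]; omega)]
      · have h1 : 2 * m - 1 + 1 = 2 * m := by omega
        rw [h1]
      · intro k hk hne
        rw [Finset.mem_Icc] at hk
        rcases lt_or_ge k (2 * m - 1) with h | h
        · rw [hodd k hk.1 (by omega), hodd (k + 1) (by omega) (by omega)]
          simp
        · have hk2 : k = 2 * m := by omega
          subst hk2
          rw [heven (2 * m) le_rfl (by omega), heven (2 * m + 1) (by omega) hlt3]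
          simp
    rw [hsum, hodd m le_rfl (by omega), hodd (2 * m - 1) (by omega) (by omega),
      heven (2 * m) le_rfl (by omega)]
    have hcast : ((m : ℕ) : ℝ) = (2 : ℝ) ^ (2 * n + 1) := by
      rw [hm]; push_cast; ring
    rw [hcast]
    have e1 : 3 * (2 * n + 1) = 6 * n + 3 := by ring
    have e2 : 2 * (2 * n + 2) = 4 * n + 4 := by ring
    rw [e1, e2]
    have hLHS : (2 : ℝ) ^ (2 * n + 1) * ((2 : ℝ) ^ (6 * n + 3))⁻¹ / 8
        = ((2 : ℝ) ^ (4 * n + 5))⁻¹ := by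
      have h8 : (8 : ℝ) = 2 ^ 3 := by norm_num
      rw [h8]
      field_simp
      rw [← pow_add, ← pow_add]
      congr 1
      omega
    rw [hLHS]
    rcases Nat.eq_zero_or_pos n with hn0 | hn1
    · subst hn0
      norm_num
    · have hab : ((2 : ℝ) ^ (4 * n + 4))⁻¹ - ((2 : ℝ) ^ (6 * n + 3))⁻¹
          ≤ |((2 : ℝ) ^ (6 * n + 3))⁻¹ - ((2 : ℝ) ^ (4 * n + 4))⁻¹| := by
        rw [abs_sub_comm]
        exact le_abs_self _
      have h1 : ((2 : ℝ) ^ (6 * n + 3))⁻¹ ≤ ((2 : ℝ) ^ (4 * n + 5))⁻¹ := by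
        apply inv_anti₀ (by positivity)
        exact pow_le_pow_right₀ one_le_two (by omega)
      have h2 : ((2 : ℝ) ^ (4 * n + 4))⁻¹ = 2 * ((2 : ℝ) ^ (4 * n + 5))⁻¹ := by
        rw [show 4 * n + 5 = (4 * n + 4) + 1 from rfl, pow_succ]
        field_simp
        ring
      calc ((2 : ℝ) ^ (4 * n + 5))⁻¹
          = 2 * ((2 : ℝ) ^ (4 * n + 5))⁻¹ - ((2 : ℝ) ^ (4 * n + 5))⁻¹ := by ring
        _ ≤ ((2 : ℝ) ^ (4 * n + 4))⁻¹ - ((2 : ℝ) ^ (6 * n + 3))⁻¹ := by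
            rw [h2]; linarith
        _ ≤ |((2 : ℝ) ^ (6 * n + 3))⁻¹ - ((2 : ℝ) ^ (4 * n + 4))⁻¹| := hab
  refine ⟨?_, key⟩
  rintro ⟨K, hK⟩
  obtain ⟨n, hn⟩ := exists_nat_gt K
  set N : ℕ := n + 2 with hN
  set m : ℕ := 2 ^ (2 * N + 1) with hm
  have hmpos : 1 ≤ m := Nat.one_le_two_pow
  have h1 := (key N).trans (hK m hmpos)
  have hcm : c m = ((2 : ℝ) ^ (3 * (2 * N + 1)))⁻¹ := by
    rw [hc (2 * N + 1) m le_rfl (Nat.pow_lt_pow_right one_lt_two (by omega))]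
    have : (2 * N + 1) % 2 = 1 := by omega
    simp [this]
  have hcpos : 0 < c m := by rw [hcm]; positivity
  have hmK : K < ((m : ℕ) : ℝ) / 8 := by
    have hnat : n < 2 ^ n := Nat.lt_two_pow_self (n := n)
    have hnat2 : 2 ^ n ≤ 2 ^ (2 * N + 1 - 3) := Nat.pow_le_pow_right (by norm_num) (by omega)
    have hm8 : m = 8 * 2 ^ (2 * N + 1 - 3) := by
      rw [hm, show (8 : ℕ) = 2 ^ 3 from rfl, ← pow_add]
      congr 1
      omega
    have : (n : ℝ) < ((m : ℕ) : ℝ) / 8 := by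
      rw [hm8]
      push_cast
      rw [mul_comm, mul_div_assoc]
      norm_num
      calc (n : ℝ) < (2 : ℝ) ^ n := by exact_mod_cast hnat
        _ ≤ (2 : ℝ) ^ (2 * N + 1 - 3) := by exact_mod_cast hnat2
    linarith
  nlinarith [h1, hcpos, hmK]
end

section
/- Let {c_n} be a nonnegative sequence in NBVS tending to zero, and suppose n·c_n → 0 as n → ∞. Then for every ε > 0 there is n_0 such that for all N ≥ n_0, ∑_{k=N}^{∞} |c_k - c_{k+1}| ≤ K·ε/N, where K depends only on the NBVS constant of {c_n}. In particular, N·∑_{k=N}^{∞}|Δc_k| → 0 as N → ∞. -/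
open Filter

-- dyadic block bound
lemma nbvs_dyadic (c : ℕ → ℝ) (hpos : ∀ n, 0 ≤ c n) (K₀ : ℝ) (hK : 0 ≤ K₀)
    (hNBVS : ∀ m : ℕ, 1 ≤ m →
      ∑ k ∈ Finset.Icc m (2 * m), |c k - c (k + 1)| ≤ K₀ * (c m + c (2 * m)))
    (ε : ℝ) (hε : 0 ≤ ε) (N : ℕ) (hN : 1 ≤ N)
    (hsm : ∀ n : ℕ, N ≤ n → (n : ℝ) * c n ≤ ε) :
    ∀ j : ℕ, ∑ k ∈ Finset.Icc N (2 ^ j * N), |c k - c (k + 1)|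
      ≤ (6 - 4 * (1/2 : ℝ) ^ j) * (K₀ * ε / N) := by
  have hN0 : (0:ℝ) < N := by exact_mod_cast hN
  -- block bound for m ≥ N
  have hblock : ∀ m : ℕ, N ≤ m →
      ∑ k ∈ Finset.Icc m (2 * m), |c k - c (k + 1)| ≤ 2 * (K₀ * ε / m) := by
    intro m hm
    have hm1 : 1 ≤ m := le_trans hN hm
    have hm0 : (0:ℝ) < m := by exact_mod_cast hm1
    have h1 : c m ≤ ε / m := by
      rw [le_div_iff₀ hm0]; have := hsm m hm; linarith [mul_comm (c m) (m:ℝ)]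
    have h2 : c (2*m) ≤ ε / (2*m) := by
      have h2m : N ≤ 2*m := le_trans hm (by omega)
      have := hsm (2*m) h2m
      have h2m0 : (0:ℝ) < (2*m:ℕ) := by positivity
      rw [le_div_iff₀ (by push_cast; linarith)]
      push_cast at this ⊢
      nlinarith [hpos (2*m)]
    have h3 : ε / (2*(m:ℝ)) ≤ ε / m := by
      apply div_le_div_of_nonneg_left hε hm0 <;> linarith
    calc ∑ k ∈ Finset.Icc m (2 * m), |c k - c (k + 1)| ≤ K₀ * (c m + c (2*m)) :=
          hNBVS m hm1
      _ ≤ K₀ * (ε/m + ε/m) := by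
          apply mul_le_mul_of_nonneg_left _ hK; linarith
      _ = 2 * (K₀ * ε / m) := by ring
  intro j
  induction j with
  | zero =>
    simp only [pow_zero, one_mul, Finset.Icc_self, Finset.sum_singleton]
    have hb := hblock N le_rfl
    have : |c N - c (N+1)| ≤ ∑ k ∈ Finset.Icc N (2*N), |c k - c (k+1)| := by
      apply Finset.single_le_sum (f := fun k => |c k - c (k+1)|)
      · intro i _; positivity
      · simp; omega
    have : |c N - c (N+1)| ≤ 2 * (K₀ * ε / N) := le_trans this hb
    linarith
  | succ j ih =>
    have hle1 : N ≤ 2 ^ j * N := Nat.le_mul_of_pos_left N (Nat.pow_pos (by norm_num))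
    have hle2 : 2 ^ j * N ≤ 2 ^ (j+1) * N := by
      apply Nat.mul_le_mul_right; exact Nat.pow_le_pow_right (by norm_num) (by omega)
    have hsplit : Finset.Icc N (2^j*N) ∪ Finset.Icc (2^j*N) (2^(j+1)*N)
        = Finset.Icc N (2^(j+1)*N) := by
      ext x
      simp only [Finset.mem_union, Finset.mem_Icc]
      omega
    have hui := Finset.sum_union_inter (s₁ := Finset.Icc N (2^j*N))
      (s₂ := Finset.Icc (2^j*N) (2^(j+1)*N)) (f := fun k => |c k - c (k+1)|)
    rw [hsplit] at hui
    have hinter : (0:ℝ) ≤ ∑ k ∈ Finset.Icc N (2^j*N) ∩ Finset.Icc (2^j*N) (2^(j+1)*N),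
        |c k - c (k+1)| := Finset.sum_nonneg (fun i _ => abs_nonneg _)
    have hb := hblock (2^j*N) hle1
    have hrw : 2 * (2^j * N) = 2^(j+1)*N := by ring
    rw [hrw] at hb
    have hpm : (((2:ℕ)^j * N : ℕ) : ℝ) = 2^j * N := by push_cast; ring
    rw [hpm] at hb
    have hb' : 2 * (K₀ * ε / (2^j * (N:ℝ))) = 2 * (1/2:ℝ)^j * (K₀ * ε / N) := by
      field_simp
      rw [mul_assoc, ← mul_pow]; norm_num
    rw [hb'] at hb
    have : ∑ k ∈ Finset.Icc N (2^(j+1)*N), |c k - c (k+1)|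
        ≤ (6 - 4*(1/2:ℝ)^j) * (K₀*ε/N) + 2 * (1/2:ℝ)^j * (K₀*ε/N) := by linarith
    calc ∑ k ∈ Finset.Icc N (2^(j+1)*N), |c k - c (k+1)|
        ≤ (6 - 4*(1/2:ℝ)^j) * (K₀*ε/N) + 2 * (1/2:ℝ)^j * (K₀*ε/N) := this
      _ = (6 - 4*(1/2:ℝ)^(j+1)) * (K₀*ε/N) := by ring

theorem nbvs_tail_variation_small (c : ℕ → ℝ) (hpos : ∀ n, 0 ≤ c n) (K : ℝ)
    (hNBVS : ∀ m : ℕ, 1 ≤ m →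
      ∑ k ∈ Finset.Icc m (2 * m), |c k - c (k + 1)| ≤ K * (c m + c (2 * m)))
    (hlim : Tendsto (fun n : ℕ => (n : ℝ) * c n) atTop (nhds 0)) :
    ∃ K' : ℝ, 0 < K' ∧
      (∀ ε : ℝ, 0 < ε → ∃ n₀ : ℕ, 1 ≤ n₀ ∧ ∀ N : ℕ, n₀ ≤ N →
        ∑' k : ℕ, |c (N + k) - c (N + k + 1)| ≤ K' * ε / N) ∧
      Tendsto (fun N : ℕ => (N : ℝ) * ∑' k : ℕ, |c (N + k) - c (N + k + 1)|)
        atTop (nhds 0) := by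
  set K₀ : ℝ := max K 0 with hK₀def
  have hK₀ : 0 ≤ K₀ := le_max_right _ _
  have hNBVS' : ∀ m : ℕ, 1 ≤ m →
      ∑ k ∈ Finset.Icc m (2 * m), |c k - c (k + 1)| ≤ K₀ * (c m + c (2 * m)) := by
    intro m hm
    refine le_trans (hNBVS m hm) ?_
    apply mul_le_mul_of_nonneg_right (le_max_left _ _)
    exact add_nonneg (hpos _) (hpos _)
  set K' : ℝ := 6 * K₀ + 1 with hK'def
  have hK' : 0 < K' := by positivity
  -- the main estimate
  have main : ∀ ε : ℝ, 0 < ε → ∃ n₀ : ℕ, 1 ≤ n₀ ∧ ∀ N : ℕ, n₀ ≤ N →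
      ∑' k : ℕ, |c (N + k) - c (N + k + 1)| ≤ K' * ε / N := by
    intro ε hε
    have := Metric.tendsto_atTop.mp hlim ε hε
    obtain ⟨n₁, hn₁⟩ := this
    refine ⟨max n₁ 1, le_max_right _ _, ?_⟩
    intro N hNmax
    have hN1 : 1 ≤ N := le_trans (le_max_right _ _) hNmax
    have hN0 : (0:ℝ) < N := by exact_mod_cast hN1
    have hsm : ∀ n : ℕ, N ≤ n → (n:ℝ) * c n ≤ ε := by
      intro n hn
      have := hn₁ n (le_trans (le_trans (le_max_left _ _) hNmax) hn)
      rw [Real.dist_eq, sub_zero] at this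
      exact le_of_lt (lt_of_abs_lt this)
    have key := nbvs_dyadic c hpos K₀ hK₀ hNBVS' ε hε.le N hN1 hsm
    apply Real.tsum_le_of_sum_range_le (fun k => abs_nonneg _)
    intro m
    have hIco : ∑ k ∈ Finset.range m, |c (N + k) - c (N + k + 1)|
        = ∑ k ∈ Finset.Ico N (N + m), |c k - c (k + 1)| := by
      rw [Finset.sum_Ico_eq_sum_range]
      simp
    rw [hIco]
    have hsubset : Finset.Ico N (N + m) ⊆ Finset.Icc N (2 ^ m * N) := by
      intro k hk
      simp only [Finset.mem_Ico, Finset.mem_Icc] at hk ⊢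
      refine ⟨hk.1, ?_⟩
      have h2m : m + 1 ≤ 2 ^ m := Nat.lt_two_pow_self
      have hmN : m ≤ m * N := Nat.le_mul_of_pos_right m (by omega)
      calc k ≤ N + m := by omega
        _ ≤ (m+1) * N := by rw [add_mul, one_mul]; linarith
        _ ≤ 2 ^ m * N := Nat.mul_le_mul_right N h2m
    have hmono : ∑ k ∈ Finset.Ico N (N + m), |c k - c (k + 1)|
        ≤ ∑ k ∈ Finset.Icc N (2 ^ m * N), |c k - c (k + 1)| :=
      Finset.sum_le_sum_of_subset_of_nonneg hsubset (fun i _ _ => abs_nonneg _)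
    have hb := key m
    have h6 : (6 - 4 * (1/2:ℝ)^m) * (K₀ * ε / N) ≤ K' * ε / N := by
      have hp : (0:ℝ) < (1/2:ℝ)^m := by positivity
      have hd : 0 ≤ ε / N := by positivity
      have : (6 - 4 * (1/2:ℝ)^m) ≤ 6 := by linarith
      have hKe : 0 ≤ K₀ * ε / N := by positivity
      calc (6 - 4 * (1/2:ℝ)^m) * (K₀ * ε / N) ≤ 6 * (K₀ * ε / N) := by nlinarith
        _ = (6 * K₀) * (ε / N) := by ring
        _ ≤ (6 * K₀ + 1) * (ε / N) := by nlinarith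
        _ = K' * ε / N := by rw [hK'def]; ring
    linarith
  refine ⟨K', hK', main, ?_⟩
  -- tendsto
  rw [Metric.tendsto_atTop]
  intro δ hδ
  have hε2 : 0 < δ / (2 * K') := by positivity
  obtain ⟨n₀, hn₀1, hn₀⟩ := main (δ / (2 * K')) hε2
  refine ⟨n₀, ?_⟩
  intro N hN
  have hN1 : 1 ≤ N := le_trans hn₀1 hN
  have hN0 : (0:ℝ) < N := by exact_mod_cast hN1
  have hts := hn₀ N hN
  have htnn : 0 ≤ ∑' k : ℕ, |c (N + k) - c (N + k + 1)| :=
    tsum_nonneg (fun k => abs_nonneg _)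
  rw [Real.dist_eq, sub_zero]
  have hval : (N:ℝ) * ∑' k : ℕ, |c (N + k) - c (N + k + 1)|
      ≤ K' * (δ / (2 * K')) := by
    calc (N:ℝ) * ∑' k : ℕ, |c (N + k) - c (N + k + 1)|
        ≤ (N:ℝ) * (K' * (δ / (2 * K')) / N) := by
          apply mul_le_mul_of_nonneg_left hts hN0.le
      _ = K' * (δ / (2 * K')) := by field_simp
  have : K' * (δ / (2 * K')) = δ / 2 := by field_simp
  rw [this] at hval
  rw [abs_of_nonneg (by positivity)]
  linarith
end

section
/- Let {b_n} be a nonnegative sequence in NBVS with lim_{n→∞} n·b_n = 0. Then the sine series ∑_{n=1}^{∞} b_n sin(nx) converges uniformly on ℝ. -/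
open Filter
open Finset
open scoped Real


lemma tele (c : ℕ → ℝ) (p : ℕ) : ∀ q, p ≤ q →
    ∑ k ∈ Finset.Icc p q, (c k - c (k+1)) = c p - c (q+1) := by
  intro q hq
  induction q, hq using Nat.le_induction with
  | base => simp
  | succ q hq ih =>
      rw [Finset.sum_Icc_succ_top (by omega), ih]; ring

lemma kernel_bound (x : ℝ) (hx : Real.sin (x/2) ≠ 0) (p q : ℕ) :
    |∑ k ∈ Finset.Icc p q, Real.sin (k * x)| ≤ 1 / |Real.sin (x/2)| := by
  set s := Real.sin (x/2) with hs
  have hspos : 0 < |s| := abs_pos.2 hx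
  rcases le_or_gt p q with h | h
  · set c : ℕ → ℝ := fun k => Real.cos (((k:ℝ) - 1/2) * x) with hc
    have key : ∀ k : ℕ, 2 * s * Real.sin (k * x) = c k - c (k+1) := by
      intro k
      simp only [hc]
      push_cast
      rw [Real.cos_sub_cos]
      have h1 : ((((k:ℝ) - 1/2)*x + (((k:ℝ)+1) - 1/2)*x))/2 = (k:ℝ) * x := by ring
      have h2 : ((((k:ℝ) - 1/2)*x - (((k:ℝ)+1) - 1/2)*x))/2 = -(x/2) := by ring
      rw [h1, h2, Real.sin_neg, hs]; ring
    have hmul : 2 * s * ∑ k ∈ Finset.Icc p q, Real.sin (k * x) = c p - c (q+1) := by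
      rw [Finset.mul_sum]
      rw [Finset.sum_congr rfl (fun k _ => key k)]
      exact tele c p q h
    have hb : |2 * s * ∑ k ∈ Finset.Icc p q, Real.sin (k * x)| ≤ 2 := by
      rw [hmul]
      have h1 := Real.neg_one_le_cos (((p:ℝ) - 1/2) * x)
      have h2 := Real.cos_le_one (((p:ℝ) - 1/2) * x)
      have h3 := Real.neg_one_le_cos ((((q+1:ℕ):ℝ) - 1/2) * x)
      have h4 := Real.cos_le_one ((((q+1:ℕ):ℝ) - 1/2) * x)
      rw [abs_le]; constructor <;> simp only [hc] <;> nlinarith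
    rw [abs_mul, abs_mul, abs_two] at hb
    rw [mul_comm, ← le_div_iff₀ (by positivity)] at hb
    calc |∑ k ∈ Finset.Icc p q, Real.sin (k * x)| ≤ 2 / (2 * |s|) := hb
      _ = 1 / |s| := by field_simp
  · rw [Finset.Icc_eq_empty (by omega)]
    simp only [Finset.sum_empty, abs_zero]
    positivity

lemma abel_id (bb s : ℕ → ℝ) (p : ℕ) : ∀ q, p ≤ q →
    ∑ k ∈ Finset.Icc p q, bb k * s k =
      (∑ k ∈ Finset.Ico p q, (bb k - bb (k+1)) * (∑ j ∈ Finset.Icc p k, s j))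
      + bb q * ∑ j ∈ Finset.Icc p q, s j := by
  intro q hq
  induction q, hq using Nat.le_induction with
  | base => simp
  | succ q hq ih =>
      rw [Finset.sum_Icc_succ_top (by omega : p ≤ q+1), ih,
        Finset.sum_Ico_succ_top hq,
        Finset.sum_Icc_succ_top (by omega : p ≤ q+1)]
      ring

lemma abel_bound (bb s : ℕ → ℝ) (hb : ∀ n, 0 ≤ bb n) (p q : ℕ) (B : ℝ)
    (hB : ∀ k, |∑ j ∈ Finset.Icc p k, s j| ≤ B) :
    |∑ k ∈ Finset.Icc p q, bb k * s k| ≤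
      B * (bb q + ∑ k ∈ Finset.Ico p q, |bb k - bb (k+1)|) := by
  have hB0 : 0 ≤ B := le_trans (abs_nonneg _) (hB p)
  rcases le_or_gt p q with h | h
  · rw [abel_id bb s p q h]
    calc |(∑ k ∈ Finset.Ico p q, (bb k - bb (k+1)) * (∑ j ∈ Finset.Icc p k, s j))
          + bb q * ∑ j ∈ Finset.Icc p q, s j|
        ≤ |∑ k ∈ Finset.Ico p q, (bb k - bb (k+1)) * (∑ j ∈ Finset.Icc p k, s j)|
          + |bb q * ∑ j ∈ Finset.Icc p q, s j| := abs_add_le _ _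
      _ ≤ (∑ k ∈ Finset.Ico p q, |bb k - bb (k+1)| * B) + bb q * B := by
          gcongr
          · calc |∑ k ∈ Finset.Ico p q, (bb k - bb (k+1)) * (∑ j ∈ Finset.Icc p k, s j)|
                ≤ ∑ k ∈ Finset.Ico p q, |(bb k - bb (k+1)) * (∑ j ∈ Finset.Icc p k, s j)| :=
                  Finset.abs_sum_le_sum_abs _ _
              _ ≤ ∑ k ∈ Finset.Ico p q, |bb k - bb (k+1)| * B := by
                  apply Finset.sum_le_sum
                  intro k _
                  rw [abs_mul]
                  exact mul_le_mul_of_nonneg_left (hB k) (abs_nonneg _)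
          · rw [abs_mul, abs_of_nonneg (hb q)]
            exact mul_le_mul_of_nonneg_left (hB q) (hb q)
      _ ≤ B * (bb q + ∑ k ∈ Finset.Ico p q, |bb k - bb (k+1)|) := by
          rw [← Finset.sum_mul]
          ring_nf
          exact le_of_eq (by ring)
  · rw [Finset.Icc_eq_empty (by omega)]
    simp only [Finset.sum_empty, abs_zero]
    have : 0 ≤ ∑ k ∈ Finset.Ico p q, |bb k - bb (k+1)| :=
      Finset.sum_nonneg fun k _ => abs_nonneg _
    have := hb q
    positivity

lemma variation_bound (b : ℕ → ℝ) (K ε : ℝ) (hK : 0 < K) (hε : 0 ≤ ε)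
    (hNBVS : ∀ m : ℕ, 1 ≤ m →
      ∑ n ∈ Finset.Icc m (2 * m), |b n - b (n + 1)| ≤ K * (b m + b (2 * m)))
    (M : ℕ) (hM : ∀ k : ℕ, M ≤ k → (k:ℝ) * b k ≤ ε)
    (m : ℕ) (hm : M ≤ m) (hm1 : 1 ≤ m) :
    ∀ n : ℕ, ∑ k ∈ Finset.Icc m n, |b k - b (k+1)| ≤ 4 * K * ε / m := by
  have hbk : ∀ k : ℕ, m ≤ k → b k ≤ ε / k := by
    intro k hk
    have hk1 : (1:ℝ) ≤ (k:ℝ) := by exact_mod_cast Nat.one_le_cast.mpr (le_trans hm1 hk)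
    rw [le_div_iff₀ (by linarith)]
    calc b k * k = (k:ℝ) * b k := by ring
      _ ≤ ε := hM k (le_trans hm hk)
  have hblock : ∀ m' : ℕ, m ≤ m' →
      ∑ k ∈ Finset.Icc m' (2 * m'), |b k - b (k+1)| ≤ 2 * K * ε / m' := by
    intro m' hm'
    have h1 : 1 ≤ m' := le_trans hm1 hm'
    have hm'R : (1:ℝ) ≤ (m':ℝ) := by exact_mod_cast h1
    have h2 : b m' ≤ ε / m' := hbk m' hm'
    have h3 : b (2*m') ≤ ε / (2*(m':ℝ)) := by
      have := hbk (2*m') (by omega)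
      calc b (2*m') ≤ ε / ((2*m' : ℕ):ℝ) := this
        _ = ε / (2*(m':ℝ)) := by push_cast; ring_nf
    have h4 : ε / (2*(m':ℝ)) ≤ ε / m' := by
      apply div_le_div_of_nonneg_left hε (by linarith) (by linarith)
    calc ∑ k ∈ Finset.Icc m' (2 * m'), |b k - b (k+1)| ≤ K * (b m' + b (2*m')) :=
          hNBVS m' h1
      _ ≤ K * (ε/m' + ε/m') := by
          apply mul_le_mul_of_nonneg_left _ hK.le
          have := le_trans h3 h4
          linarith
      _ = 2 * K * ε / m' := by field_simp; ring
  have hmR : (1:ℝ) ≤ (m:ℝ) := by exact_mod_cast hm1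
  have hdy : ∀ j : ℕ, 1 ≤ j →
      ∑ k ∈ Finset.Icc m (2^j * m), |b k - b (k+1)| ≤
        4 * K * ε / m * (1 - (1/2:ℝ)^j) := by
    intro j hj
    induction j, hj using Nat.le_induction with
    | base =>
        have : (2^1 : ℕ) * m = 2 * m := by norm_num
        rw [this]
        calc ∑ k ∈ Finset.Icc m (2 * m), |b k - b (k+1)| ≤ 2 * K * ε / m :=
              hblock m le_rfl
          _ = 4 * K * ε / m * (1 - (1/2:ℝ)^1) := by field_simp; ring
    | succ j hj ih =>
        set a := 2^j * m with ha
        have hma : m ≤ a := by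
          have h1 : 1 ≤ 2^j := Nat.one_le_two_pow
          calc m = 1 * m := (one_mul m).symm
            _ ≤ 2^j * m := Nat.mul_le_mul_right m h1
        have h2a : 2^(j+1) * m = 2 * a := by rw [ha]; ring
        have hsplit : ∑ k ∈ Finset.Icc m (2^(j+1) * m), |b k - b (k+1)| =
            (∑ k ∈ Finset.Icc m a, |b k - b (k+1)|)
            + ∑ k ∈ Finset.Ioc a (2*a), |b k - b (k+1)| := by
          rw [h2a]
          have e1 : Finset.Icc m (2*a) = Finset.Ioc (m-1) (2*a) := by
            rw [← Finset.Icc_add_one_left_eq_Ioc]; congr 1; omega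
          have e2 : Finset.Icc m a = Finset.Ioc (m-1) a := by
            rw [← Finset.Icc_add_one_left_eq_Ioc]; congr 1; omega
          rw [e1, e2]
          exact (Finset.sum_Ioc_consecutive _ (by omega) (by omega)).symm
        rw [hsplit]
        have htail : ∑ k ∈ Finset.Ioc a (2*a), |b k - b (k+1)| ≤ 2 * K * ε / a := by
          calc ∑ k ∈ Finset.Ioc a (2*a), |b k - b (k+1)|
              ≤ ∑ k ∈ Finset.Icc a (2*a), |b k - b (k+1)| := by
                apply Finset.sum_le_sum_of_subset_of_nonneg
                · intro k hk
                  simp only [Finset.mem_Ioc] at hk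
                  simp only [Finset.mem_Icc]
                  omega
                · intro k _ _; exact abs_nonneg _
            _ ≤ 2 * K * ε / a := hblock a hma
        have haR : ((a:ℕ):ℝ) = 2^j * (m:ℝ) := by rw [ha]; push_cast; ring
        have h2j : (0:ℝ) < 2^j := by positivity
        calc (∑ k ∈ Finset.Icc m a, |b k - b (k+1)|)
              + ∑ k ∈ Finset.Ioc a (2*a), |b k - b (k+1)|
            ≤ 4 * K * ε / m * (1 - (1/2:ℝ)^j) + 2 * K * ε / a := add_le_add ih htail
          _ = 4 * K * ε / m * (1 - (1/2:ℝ)^(j+1)) := by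
              rw [haR]
              have hm0 : (m:ℝ) ≠ 0 := by linarith
              simp only [one_div_pow]
              field_simp
              ring
  intro n
  have h2n : n ≤ 2^(n+1) * m := by
    have h1 : n < 2^n := Nat.lt_two_pow_self
    have h2 : (2:ℕ)^n ≤ 2^(n+1) := Nat.pow_le_pow_right (by norm_num) (by omega)
    calc n ≤ 2^(n+1) := by omega
      _ ≤ 2^(n+1) * m := Nat.le_mul_of_pos_right _ (by omega)
  have hsub : ∑ k ∈ Finset.Icc m n, |b k - b (k+1)| ≤
      ∑ k ∈ Finset.Icc m (2^(n+1) * m), |b k - b (k+1)| := by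
    apply Finset.sum_le_sum_of_subset_of_nonneg
    · intro k hk; simp only [Finset.mem_Icc] at *; omega
    · intro k _ _; exact abs_nonneg _
  have hKεm : 0 ≤ 4 * K * ε / m := by positivity
  calc ∑ k ∈ Finset.Icc m n, |b k - b (k+1)|
      ≤ 4 * K * ε / m * (1 - (1/2:ℝ)^(n+1)) := le_trans hsub (hdy (n+1) (by omega))
    _ ≤ 4 * K * ε / m * 1 := by
        apply mul_le_mul_of_nonneg_left _ hKεm
        have : (0:ℝ) < (1/2:ℝ)^(n+1) := by positivity
        linarith
    _ = 4 * K * ε / m := mul_one _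

set_option maxHeartbeats 1000000 in
lemma tail_core (b : ℕ → ℝ) (hpos : ∀ n, 0 ≤ b n) (K ε : ℝ) (hK : 0 < K) (hε : 0 < ε)
    (hNBVS : ∀ m : ℕ, 1 ≤ m →
      ∑ n ∈ Finset.Icc m (2 * m), |b n - b (n + 1)| ≤ K * (b m + b (2 * m)))
    (M : ℕ) (hM1 : 1 ≤ M) (hM : ∀ k : ℕ, M ≤ k → (k:ℝ) * b k ≤ ε)
    (m n : ℕ) (hm : M ≤ m) (x : ℝ) (hx0 : 0 ≤ x) (hxπ : x ≤ π) :
    |∑ k ∈ Finset.Icc m n, b k * Real.sin (k * x)| ≤ (6 + 8*K) * ε := by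
  have hCε : 0 ≤ (6 + 8*K) * ε := by positivity
  rcases hx0.eq_or_lt with heq | hx
  · rw [← heq]
    simp only [mul_zero, Real.sin_zero, Finset.sum_const_zero, abs_zero]
    exact hCε
  have hm1 : 1 ≤ m := le_trans hM1 hm
  rcases lt_or_ge n m with hnm | hmn
  · rw [Finset.Icc_eq_empty (by omega)]
    simpa using hCε
  set N := ⌊π/x⌋₊ with hN
  have hπ3 := Real.pi_gt_three
  have hπ4 := Real.pi_le_four
  have hπx1 : 1 ≤ π/x := (one_le_div hx).mpr hxπ
  have hN1 : 1 ≤ N := Nat.le_floor (by exact_mod_cast hπx1)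
  have hNle : (N:ℝ) ≤ π/x := Nat.floor_le (by positivity)
  have hNgt : π/x < N+1 := Nat.lt_floor_add_one _
  have hsinhalf : x/4 ≤ Real.sin (x/2) := by
    have h1 : (2/π) * (x/2) ≤ Real.sin (x/2) :=
      Real.mul_le_sin (by positivity) (by linarith)
    have h2 : x/4 ≤ x/π := by
      apply div_le_div_of_nonneg_left hx.le (by linarith) hπ4
    calc x/4 ≤ x/π := h2
      _ = (2/π) * (x/2) := by field_simp
      _ ≤ Real.sin (x/2) := h1
  have hshalfpos : 0 < Real.sin (x/2) := lt_of_lt_of_le (by positivity) hsinhalf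
  have hB : ∀ p k : ℕ, |∑ j ∈ Finset.Icc p k, Real.sin (j*x)| ≤ 4/x := by
    intro p k
    calc |∑ j ∈ Finset.Icc p k, Real.sin (j*x)| ≤ 1/|Real.sin (x/2)| :=
          kernel_bound x (ne_of_gt hshalfpos) p k
      _ = 1/Real.sin (x/2) := by rw [abs_of_pos hshalfpos]
      _ ≤ 1/(x/4) := one_div_le_one_div_of_le (by positivity) hsinhalf
      _ = 4/x := one_div_div x 4
  have hpart1 : ∀ r : ℕ, r ≤ N →
      |∑ k ∈ Finset.Icc m r, b k * Real.sin (k * x)| ≤ π * ε := by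
    intro r hr
    have hterm : ∀ k ∈ Finset.Icc m r, |b k * Real.sin (k*x)| ≤ ε * x := by
      intro k hk
      rw [Finset.mem_Icc] at hk
      have hkb := hM k (le_trans hm hk.1)
      have hsink : |Real.sin ((k:ℝ)*x)| ≤ (k:ℝ)*x := by
        calc |Real.sin ((k:ℝ)*x)| ≤ |(k:ℝ)*x| := Real.abs_sin_le_abs
          _ = (k:ℝ)*x := abs_of_nonneg (by positivity)
      calc |b k * Real.sin ((k:ℝ)*x)| = b k * |Real.sin ((k:ℝ)*x)| := by
            rw [abs_mul, abs_of_nonneg (hpos k)]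
        _ ≤ b k * ((k:ℝ)*x) := mul_le_mul_of_nonneg_left hsink (hpos k)
        _ = ((k:ℝ)*b k)*x := by ring
        _ ≤ ε * x := mul_le_mul_of_nonneg_right hkb hx.le
    have hcard : ((Finset.Icc m r).card : ℝ) ≤ (N:ℝ) := by
      rw [Nat.card_Icc]
      exact_mod_cast Nat.cast_le.mpr (by omega : r + 1 - m ≤ N)
    calc |∑ k ∈ Finset.Icc m r, b k * Real.sin (k * x)|
        ≤ ∑ k ∈ Finset.Icc m r, |b k * Real.sin (k * x)| := Finset.abs_sum_le_sum_abs _ _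
      _ ≤ ∑ _k ∈ Finset.Icc m r, ε * x := Finset.sum_le_sum hterm
      _ = ((Finset.Icc m r).card : ℝ) * (ε * x) := by
          rw [Finset.sum_const, nsmul_eq_mul]
      _ ≤ (N:ℝ) * (ε * x) := mul_le_mul_of_nonneg_right hcard (by positivity)
      _ ≤ π * ε := by
          have hNx : (N:ℝ) * x ≤ π := (le_div_iff₀ hx).mp hNle
          nlinarith
  have hpart2 : ∀ p : ℕ, m ≤ p → N < p → p ≤ n →
      |∑ k ∈ Finset.Icc p n, b k * Real.sin (k * x)| ≤ (2 + 6*K) * ε := by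
    intro p hmp hNp hpn
    have h1 := abel_bound b (fun k => Real.sin (k*x)) hpos p n (4/x) (hB p)
    have hpM : M ≤ p := le_trans hm hmp
    have hp1 : 1 ≤ p := by omega
    have hvar := variation_bound b K ε hK hε.le hNBVS M hM p hpM hp1 n
    have hIco : ∑ k ∈ Finset.Ico p n, |b k - b (k+1)| ≤
        ∑ k ∈ Finset.Icc p n, |b k - b (k+1)| := by
      apply Finset.sum_le_sum_of_subset_of_nonneg
      · intro k hk; simp only [Finset.mem_Ico] at hk; simp only [Finset.mem_Icc]; omega
      · intro k _ _; exact abs_nonneg _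
    have hNpos : (0:ℝ) < (N:ℝ)+1 := by positivity
    have hpN1 : ((N:ℝ)+1) ≤ (p:ℝ) := by exact_mod_cast (by omega : N + 1 ≤ p)
    have hppos : (0:ℝ) < (p:ℝ) := lt_of_lt_of_le hNpos hpN1
    have hbn : b n ≤ ε / p := by
      have hnb := hM n (le_trans hpM hpn)
      have hnR : (p:ℝ) ≤ (n:ℝ) := Nat.cast_le.mpr hpn
      rw [le_div_iff₀ hppos]
      nlinarith [hpos n]
    have hub : b n + ∑ k ∈ Finset.Ico p n, |b k - b (k+1)| ≤
        (1+4*K)*ε/((N:ℝ)+1) := by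
      have h2 : ∑ k ∈ Finset.Ico p n, |b k - b (k+1)| ≤ 4*K*ε/(p:ℝ) := le_trans hIco hvar
      have e1 : ε/(p:ℝ) ≤ ε/((N:ℝ)+1) := div_le_div_of_nonneg_left hε.le hNpos hpN1
      have e2 : 4*K*ε/(p:ℝ) ≤ 4*K*ε/((N:ℝ)+1) :=
        div_le_div_of_nonneg_left (by positivity) hNpos hpN1
      calc b n + ∑ k ∈ Finset.Ico p n, |b k - b (k+1)|
          ≤ ε/(p:ℝ) + 4*K*ε/(p:ℝ) := add_le_add hbn h2
        _ ≤ ε/((N:ℝ)+1) + 4*K*ε/((N:ℝ)+1) := add_le_add e1 e2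
        _ = (1+4*K)*ε/((N:ℝ)+1) := by ring
    have hxu : (3:ℝ) < x*((N:ℝ)+1) := by
      have := (div_lt_iff₀ hx).mp hNgt
      nlinarith
    calc |∑ k ∈ Finset.Icc p n, b k * Real.sin (k * x)|
        ≤ (4/x) * (b n + ∑ k ∈ Finset.Ico p n, |b k - b (k+1)|) := h1
      _ ≤ (4/x) * ((1+4*K)*ε/((N:ℝ)+1)) := mul_le_mul_of_nonneg_left hub (by positivity)
      _ = (4*(1+4*K)*ε)/(x*((N:ℝ)+1)) := by field_simp
      _ ≤ (4*(1+4*K)*ε)/3 :=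
          div_le_div_of_nonneg_left (by positivity) (by norm_num) hxu.le
      _ ≤ (2 + 6*K) * ε := by
          rw [div_le_iff₀ (by norm_num : (0:ℝ) < 3)]
          nlinarith [mul_pos hK hε]
  rcases le_or_gt n N with hnN | hNn
  · calc |∑ k ∈ Finset.Icc m n, b k * Real.sin (k * x)| ≤ π * ε := hpart1 n hnN
      _ ≤ (6 + 8*K) * ε := by nlinarith [mul_pos hK hε]
  rcases le_or_gt m N with hmN | hNm
  · have hsplit : ∑ k ∈ Finset.Icc m n, b k * Real.sin (k * x) =
        (∑ k ∈ Finset.Icc m N, b k * Real.sin (k * x))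
        + ∑ k ∈ Finset.Icc (N+1) n, b k * Real.sin (k * x) := by
      have e1 : Finset.Icc m n = Finset.Ioc (m-1) n := by
        rw [← Finset.Icc_add_one_left_eq_Ioc]; congr 1; omega
      have e2 : Finset.Icc m N = Finset.Ioc (m-1) N := by
        rw [← Finset.Icc_add_one_left_eq_Ioc]; congr 1; omega
      have e3 : Finset.Icc (N+1) n = Finset.Ioc N n := by
        rw [← Finset.Icc_add_one_left_eq_Ioc]
      rw [e1, e2, e3]
      exact (Finset.sum_Ioc_consecutive _ (by omega) (by omega)).symm
    rw [hsplit]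
    calc |(∑ k ∈ Finset.Icc m N, b k * Real.sin (k * x))
          + ∑ k ∈ Finset.Icc (N+1) n, b k * Real.sin (k * x)|
        ≤ |∑ k ∈ Finset.Icc m N, b k * Real.sin (k * x)|
          + |∑ k ∈ Finset.Icc (N+1) n, b k * Real.sin (k * x)| := abs_add_le _ _
      _ ≤ π * ε + (2 + 6*K) * ε :=
          add_le_add (hpart1 N le_rfl) (hpart2 (N+1) (by omega) (by omega) (by omega))
      _ ≤ (6 + 8*K) * ε := by nlinarith [mul_pos hK hε]
  · calc |∑ k ∈ Finset.Icc m n, b k * Real.sin (k * x)| ≤ (2 + 6*K) * ε :=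
          hpart2 m le_rfl hNm hmn
      _ ≤ (6 + 8*K) * ε := by nlinarith [mul_pos hK hε]

lemma tail_bound (b : ℕ → ℝ) (hpos : ∀ n, 0 ≤ b n) (K ε : ℝ) (hK : 0 < K) (hε : 0 < ε)
    (hNBVS : ∀ m : ℕ, 1 ≤ m →
      ∑ n ∈ Finset.Icc m (2 * m), |b n - b (n + 1)| ≤ K * (b m + b (2 * m)))
    (M : ℕ) (hM1 : 1 ≤ M) (hM : ∀ k : ℕ, M ≤ k → (k:ℝ) * b k ≤ ε)
    (m n : ℕ) (hm : M ≤ m) (x : ℝ) :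
    |∑ k ∈ Finset.Icc m n, b k * Real.sin (k * x)| ≤ (6 + 8*K) * ε := by
  set g : ℝ → ℝ := fun y => ∑ k ∈ Finset.Icc m n, b k * Real.sin (k*y) with hg
  have hper : ∀ (y:ℝ) (l:ℤ), g (y + l*(2*π)) = g y := by
    intro y l
    apply Finset.sum_congr rfl
    intro k _
    congr 1
    have e : (k:ℝ)*(y + l*(2*π)) = k*y + (((k:ℤ)*l : ℤ):ℝ)*(2*π) := by push_cast; ring
    rw [e, Real.sin_add_int_mul_two_pi]
  have hodd : ∀ y:ℝ, g (-y) = -g y := by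
    intro y
    simp only [hg, ← Finset.sum_neg_distrib]
    apply Finset.sum_congr rfl
    intro k _
    rw [mul_neg, Real.sin_neg, mul_neg]
  have h2π : 0 < 2*π := by positivity
  set l := ⌊x/(2*π)⌋ with hl
  set y := x - l*(2*π) with hy
  have hy0 : 0 ≤ y := Int.sub_floor_div_mul_nonneg x h2π
  have hy2 : y < 2*π := Int.sub_floor_div_mul_lt x h2π
  have hgx : g x = g y := by
    have e : x = y + l*(2*π) := by rw [hy]; ring
    rw [e, hper]
  have hgoal : (∑ k ∈ Finset.Icc m n, b k * Real.sin (k * x)) = g x := rfl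
  rw [hgoal]
  rcases le_or_gt y π with hyπ | hyπ
  · rw [hgx]
    exact tail_core b hpos K ε hK hε hNBVS M hM1 hM m n hm y hy0 hyπ
  · have e2 : g y = - g (2*π - y) := by
      have e : (2*π - y : ℝ) = -y + ((1:ℤ):ℝ)*(2*π) := by push_cast; ring
      rw [e, hper, hodd]; ring
    rw [hgx, e2, abs_neg]
    exact tail_core b hpos K ε hK hε hNBVS M hM1 hM m n hm (2*π - y)
      (by linarith) (by linarith)

theorem nbvs_sine_series_uniform_convergence (b : ℕ → ℝ) (hpos : ∀ n, 0 ≤ b n)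
    (K : ℝ) (hK : 0 < K)
    (hNBVS : ∀ m : ℕ, 1 ≤ m →
      ∑ n ∈ Finset.Icc m (2 * m), |b n - b (n + 1)| ≤ K * (b m + b (2 * m)))
    (hlim : Tendsto (fun n : ℕ => (n : ℝ) * b n) atTop (nhds 0)) :
    ∃ f : ℝ → ℝ, TendstoUniformly
      (fun (n : ℕ) (x : ℝ) => ∑ k ∈ Finset.Icc 1 n, b k * Real.sin (k * x))
      f atTop := by
  set S : ℕ → ℝ → ℝ := fun n x => ∑ k ∈ Finset.Icc 1 n, b k * Real.sin (k * x) with hS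
  have hcauchy : UniformCauchySeqOn S atTop Set.univ := by
    rw [Metric.uniformCauchySeqOn_iff]
    intro δ hδ
    have hC : (0:ℝ) < 6 + 8*K := by linarith
    set ε := δ/(2*(6+8*K)) with hεdef
    have hε : 0 < ε := by positivity
    have hev : ∀ᶠ k : ℕ in atTop, (k:ℝ)*b k < ε := hlim.eventually_lt_const hε
    obtain ⟨M0, hM0⟩ := Filter.eventually_atTop.mp hev
    set M := max M0 1 with hMdef
    have hM1 : 1 ≤ M := le_max_right _ _
    have hM : ∀ k : ℕ, M ≤ k → (k:ℝ)*b k ≤ ε := fun k hk =>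
      (hM0 k (le_trans (le_max_left _ _) hk)).le
    refine ⟨M, ?_⟩
    have key : ∀ a c : ℕ, M ≤ a → a ≤ c → ∀ x : ℝ, |S c x - S a x| ≤ (6 + 8*K) * ε := by
      intro a c ha hac x
      have hsplit : S c x = S a x + ∑ k ∈ Finset.Icc (a+1) c, b k * Real.sin (k * x) := by
        simp only [hS]
        have e1 : Finset.Icc 1 c = Finset.Ioc 0 c := by rw [← Finset.Icc_add_one_left_eq_Ioc, zero_add]
        have e2 : Finset.Icc 1 a = Finset.Ioc 0 a := by rw [← Finset.Icc_add_one_left_eq_Ioc, zero_add]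
        have e3 : Finset.Icc (a+1) c = Finset.Ioc a c := by rw [← Finset.Icc_add_one_left_eq_Ioc]
        rw [e1, e2, e3]
        exact (Finset.sum_Ioc_consecutive _ (by omega) hac).symm
      rw [hsplit]
      simp only [add_sub_cancel_left]
      exact tail_bound b hpos K ε hK hε hNBVS M hM1 hM (a+1) c (by omega) x
    intro n1 hn1 n2 hn2 x _
    rw [Real.dist_eq]
    have hhalf : (6 + 8*K) * ε < δ := by
      rw [hεdef]
      rw [mul_div_assoc']
      rw [div_lt_iff₀ (by positivity)]
      nlinarith
    rcases le_total n1 n2 with h | h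
    · rw [abs_sub_comm]
      exact lt_of_le_of_lt (key n1 n2 hn1 h x) hhalf
    · exact lt_of_le_of_lt (key n2 n1 hn2 h x) hhalf
  have hpt : ∀ x : ℝ, ∃ L, Tendsto (fun n => S n x) atTop (nhds L) := fun x =>
    cauchySeq_tendsto_of_complete (hcauchy.cauchySeq (Set.mem_univ x))
  choose f hf using hpt
  exact ⟨f, tendstoUniformlyOn_univ.mp
    (hcauchy.tendstoUniformlyOn_of_tendsto (fun x _ => hf x))⟩
end

section
/- Let {b_n} be a nonnegative sequence in NBVS. If the sine series ∑_{n=1}^{∞} b_n sin(nx) converges uniformly on ℝ, then lim_{n→∞} n·b_n = 0. -/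
open Filter

/-- Telescoping estimate: `|b (a+d) - b a|` is at most the sum of consecutive
differences over `Ico a (a+d)`. -/
lemma nbvs_aux_abs_sub_le_sum (b : ℕ → ℝ) (a : ℕ) :
    ∀ d : ℕ, |b (a + d) - b a| ≤ ∑ n ∈ Finset.Ico a (a + d), |b n - b (n + 1)| := by
  intro d
  induction d with
  | zero => simp
  | succ d ih =>
    have hsum : ∑ n ∈ Finset.Ico a (a + d + 1), |b n - b (n + 1)|
        = (∑ n ∈ Finset.Ico a (a + d), |b n - b (n + 1)|) + |b (a + d) - b (a + d + 1)| :=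
      Finset.sum_Ico_succ_top (Nat.le_add_right a d) _
    have h1 : |b (a + (d + 1)) - b a| ≤ |b (a + d + 1) - b (a + d)| + |b (a + d) - b a| := by
      have := abs_sub_le (b (a + d + 1)) (b (a + d)) (b a)
      simpa [← add_assoc] using this
    have h2 : |b (a + d + 1) - b (a + d)| = |b (a + d) - b (a + d + 1)| := abs_sub_comm _ _
    calc |b (a + (d + 1)) - b a| ≤ |b (a + d + 1) - b (a + d)| + |b (a + d) - b a| := h1
      _ ≤ |b (a + d) - b (a + d + 1)| + ∑ n ∈ Finset.Ico a (a + d), |b n - b (n + 1)| := by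
          rw [h2]; linarith
      _ = ∑ n ∈ Finset.Ico a (a + (d + 1)), |b n - b (n + 1)| := by
          rw [show a + (d + 1) = a + d + 1 from rfl, hsum]; ring

/-- From uniform convergence of the sine series, the dyadic block sums of the
coefficients are eventually small. -/
lemma nbvs_aux_block_sum_small (b : ℕ → ℝ) (hpos : ∀ n, 0 ≤ b n) (f : ℝ → ℝ)
    (hf : TendstoUniformly
      (fun (n : ℕ) (x : ℝ) => ∑ k ∈ Finset.Icc 1 n, b k * Real.sin (k * x)) f atTop)
    (δ : ℝ) (hδ : 0 < δ) :
    ∃ N : ℕ, 1 ≤ N ∧ ∀ m : ℕ, N ≤ m → ∑ k ∈ Finset.Icc m (2 * m), b k ≤ 2 * δ := by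
  rw [Metric.tendstoUniformly_iff] at hf
  obtain ⟨N₁, hN₁⟩ := eventually_atTop.1 (hf (δ / 2) (by positivity))
  refine ⟨N₁ + 1, by omega, ?_⟩
  intro m hm
  have hm1 : 1 ≤ m := by omega
  have hmpos : (0:ℝ) < m := by exact_mod_cast hm1
  set x : ℝ := Real.pi / (4 * m) with hxdef
  have hπ := Real.pi_pos
  have hx0 : 0 ≤ x := by positivity
  -- the block sum of `b k * sin (k x)` is the difference of two partial sums
  have hdiff : (∑ k ∈ Finset.Icc 1 (2 * m), b k * Real.sin (k * x))
      - (∑ k ∈ Finset.Icc 1 (m - 1), b k * Real.sin (k * x))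
      = ∑ k ∈ Finset.Icc m (2 * m), b k * Real.sin (k * x) := by
    have hc := Finset.sum_Ioc_consecutive (fun k : ℕ => b k * Real.sin (k * x))
      (Nat.zero_le (m - 1)) (by omega : m - 1 ≤ 2 * m)
    have e1 : Finset.Icc 1 (2 * m) = Finset.Ioc 0 (2 * m) := Finset.Icc_add_one_left_eq_Ioc 0 (2 * m)
    have e2 : Finset.Icc 1 (m - 1) = Finset.Ioc 0 (m - 1) := Finset.Icc_add_one_left_eq_Ioc 0 (m - 1)
    have e3 : Finset.Icc m (2 * m) = Finset.Ioc (m - 1) (2 * m) := by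
      rw [← Finset.Icc_add_one_left_eq_Ioc]
      congr 1
      omega
    rw [e1, e2, e3]
    linarith [hc]
  have habs : |∑ k ∈ Finset.Icc m (2 * m), b k * Real.sin (k * x)| < δ := by
    rw [← hdiff]
    have h2m := hN₁ (2 * m) (by omega) x
    have hm' := hN₁ (m - 1) (by omega) x
    simp only [Real.dist_eq] at h2m hm'
    calc |(∑ k ∈ Finset.Icc 1 (2 * m), b k * Real.sin (k * x))
          - (∑ k ∈ Finset.Icc 1 (m - 1), b k * Real.sin (k * x))|
        ≤ |(∑ k ∈ Finset.Icc 1 (2 * m), b k * Real.sin (k * x)) - f x|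
          + |f x - (∑ k ∈ Finset.Icc 1 (m - 1), b k * Real.sin (k * x))| :=
          abs_sub_le _ _ _
      _ < δ / 2 + δ / 2 := by
          rw [abs_sub_comm]
          exact add_lt_add h2m hm'
      _ = δ := by ring
  -- on the block, `sin (k x) ≥ 1/2`
  have hsin : ∀ k ∈ Finset.Icc m (2 * m), (1:ℝ) / 2 ≤ Real.sin (k * x) := by
    intro k hk
    obtain ⟨hk1, hk2⟩ := Finset.mem_Icc.1 hk
    have hk1' : (m:ℝ) ≤ k := by exact_mod_cast hk1
    have hk2' : (k:ℝ) ≤ 2 * m := by exact_mod_cast hk2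
    have hmx : (m:ℝ) * x = Real.pi / 4 := by
      rw [hxdef]; field_simp
    have h2mx : (2 * (m:ℝ)) * x = Real.pi / 2 := by
      rw [hxdef]; field_simp; ring
    have hlb : Real.pi / 4 ≤ (k:ℝ) * x := by
      rw [← hmx]; exact mul_le_mul_of_nonneg_right hk1' hx0
    have hub : (k:ℝ) * x ≤ Real.pi / 2 := by
      rw [← h2mx]; exact mul_le_mul_of_nonneg_right hk2' hx0
    have hmono : Real.sin (Real.pi / 4) ≤ Real.sin ((k:ℝ) * x) :=
      Real.sin_le_sin_of_le_of_le_pi_div_two (by linarith) hub hlb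
    rw [Real.sin_pi_div_four] at hmono
    have hsqrt2 : (1:ℝ) ≤ Real.sqrt 2 := by
      nlinarith [Real.sq_sqrt (by norm_num : (0:ℝ) ≤ 2), Real.sqrt_nonneg 2]
    linarith
  have hlow : (∑ k ∈ Finset.Icc m (2 * m), b k) * (1 / 2)
      ≤ ∑ k ∈ Finset.Icc m (2 * m), b k * Real.sin (k * x) := by
    rw [Finset.sum_mul]
    refine Finset.sum_le_sum fun k hk => ?_
    exact mul_le_mul_of_nonneg_left (hsin k hk) (hpos k)
  have := (le_abs_self (∑ k ∈ Finset.Icc m (2 * m), b k * Real.sin (k * x))).trans habs.le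
  linarith

theorem nbvs_sine_series_uniform_convergence_necessary (b : ℕ → ℝ)
    (hpos : ∀ n, 0 ≤ b n) (K : ℝ) (hK : 0 < K)
    (hNBVS : ∀ m : ℕ, 1 ≤ m →
      ∑ n ∈ Finset.Icc m (2 * m), |b n - b (n + 1)| ≤ K * (b m + b (2 * m)))
    (hconv : ∃ f : ℝ → ℝ, TendstoUniformly
      (fun (n : ℕ) (x : ℝ) => ∑ k ∈ Finset.Icc 1 n, b k * Real.sin (k * x))
      f atTop) :
    Tendsto (fun n : ℕ => (n : ℝ) * b n) atTop (nhds 0) := by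
  obtain ⟨f, hf⟩ := hconv
  rw [Metric.tendsto_atTop]
  intro ε hε
  have hK1 : (0:ℝ) < 1 + K := by linarith
  set δ : ℝ := ε / (9 * (1 + K)) with hδdef
  have hδ : 0 < δ := by positivity
  obtain ⟨N, hN1, hA⟩ := nbvs_aux_block_sum_small b hpos f hf δ hδ
  refine ⟨2 * N + 2, ?_⟩
  intro t ht
  set s : ℕ := (t + 1) / 2 with hsdef
  have hst : s ≤ t := by omega
  have hs2 : t ≤ 2 * s := by omega
  have hsN : N ≤ s := by omega
  have ht1 : 1 ≤ t := by omega
  -- pick the minimizer of `b m + b (2m)` over `Icc s t`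
  have hne : (Finset.Icc s t).Nonempty := ⟨s, Finset.mem_Icc.2 ⟨le_rfl, hst⟩⟩
  obtain ⟨m', hm'mem, hmin⟩ :=
    Finset.exists_min_image (Finset.Icc s t) (fun m => b m + b (2 * m)) hne
  obtain ⟨hsm', hm't⟩ := Finset.mem_Icc.1 hm'mem
  set β : ℝ := b m' + b (2 * m') with hβdef
  have hβ0 : 0 ≤ β := add_nonneg (hpos m') (hpos (2 * m'))
  -- the sum of `b m + b (2m)` over the block is at most `4 δ`
  have hsum1 : ∑ m ∈ Finset.Icc s t, b m ≤ 2 * δ := by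
    refine le_trans (Finset.sum_le_sum_of_subset_of_nonneg ?_ fun i _ _ => hpos i) (hA s hsN)
    intro n hn
    simp only [Finset.mem_Icc] at *
    omega
  have hsum2 : ∑ m ∈ Finset.Icc s t, b (2 * m) ≤ 2 * δ := by
    have hinj : Set.InjOn (fun m : ℕ => 2 * m) (Finset.Icc s t) := by
      intro a _ c _ h
      simp only at h
      omega
    rw [← Finset.sum_image hinj]
    refine le_trans
      (Finset.sum_le_sum_of_subset_of_nonneg ?_ fun i _ _ => hpos i) (hA (2 * s) (by omega))
    intro k hk
    obtain ⟨m, hm, rfl⟩ := Finset.mem_image.1 hk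
    simp only [Finset.mem_Icc] at hm ⊢
    omega
  have hβsum : ∑ m ∈ Finset.Icc s t, (b m + b (2 * m)) ≤ 4 * δ := by
    rw [Finset.sum_add_distrib]; linarith
  -- pigeonhole
  have hpig : (Finset.Icc s t).card • β ≤ ∑ m ∈ Finset.Icc s t, (b m + b (2 * m)) :=
    Finset.card_nsmul_le_sum _ _ _ fun i hi => hmin i hi
  have hcard : ((Finset.Icc s t).card : ℝ) * β ≤ 4 * δ := by
    rw [nsmul_eq_mul] at hpig
    linarith
  have hcard2 : (t:ℝ) ≤ 2 * (Finset.Icc s t).card := by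
    rw [Nat.card_Icc]
    have : t ≤ 2 * (t + 1 - s) := by omega
    exact_mod_cast this
  have htβ : (t:ℝ) * β ≤ 8 * δ := by nlinarith
  -- transport smallness to `b t` via the NBVS variation bound
  have h2m't : t ≤ 2 * m' := by omega
  have hvar : |b t - b m'| ≤ K * β := by
    have h1 := nbvs_aux_abs_sub_le_sum b m' (t - m')
    rw [show m' + (t - m') = t from by omega] at h1
    refine h1.trans (le_trans
      (Finset.sum_le_sum_of_subset_of_nonneg ?_ fun i _ _ => abs_nonneg _)
      (hNBVS m' (by omega)))
    intro n hn
    simp only [Finset.mem_Ico, Finset.mem_Icc] at *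
    omega
  have hbt : b t ≤ (1 + K) * β := by
    have h2 := abs_le.1 hvar
    have h3 : b m' ≤ β := by
      have := hpos (2 * m'); rw [hβdef]; linarith
    nlinarith [h2.2]
  have ht0 : (0:ℝ) ≤ t := Nat.cast_nonneg t
  have hfinal : (t:ℝ) * b t ≤ 8 * (1 + K) * δ := by
    calc (t:ℝ) * b t ≤ (t:ℝ) * ((1 + K) * β) := mul_le_mul_of_nonneg_left hbt ht0
      _ = (1 + K) * ((t:ℝ) * β) := by ring
      _ ≤ (1 + K) * (8 * δ) := mul_le_mul_of_nonneg_left htβ hK1.le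
      _ = 8 * (1 + K) * δ := by ring
  have hδε : 8 * (1 + K) * δ < ε := by
    rw [hδdef]
    rw [show 8 * (1 + K) * (ε / (9 * (1 + K))) = (8 / 9) * ε from by field_simp]
    linarith
  rw [Real.dist_eq, sub_zero, abs_of_nonneg (mul_nonneg ht0 (hpos t))]
  linarith
end

section
/- Let {c_n} be a nonnegative sequence in NBVS. Then ∑_{k=n}^{2n} |c_k - c_{k+1}|·log(k) = O( max_{n ≤ k ≤ 2n} c_k·log(k) ) uniformly in n ≥ 2; i.e., there is a constant K' depending only on the NBVS constant such that ∑_{k=n}^{2n}|Δc_k| log k ≤ K' max_{n≤k≤2n} c_k log k for all n ≥ 2. -/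
theorem nbvs_log_weighted_variation (c : ℕ → ℝ) (hpos : ∀ n, 0 ≤ c n) (K : ℝ)
    (hNBVS : ∀ m : ℕ, 1 ≤ m →
      ∑ k ∈ Finset.Icc m (2 * m), |c k - c (k + 1)| ≤ K * (c m + c (2 * m))) :
    ∃ K' : ℝ, 0 < K' ∧ ∀ n : ℕ, 2 ≤ n →
      ∑ k ∈ Finset.Icc n (2 * n), |c k - c (k + 1)| * Real.log k ≤
        K' * (Finset.Icc n (2 * n)).sup' (Finset.nonempty_Icc.mpr (by omega))
          (fun k => c k * Real.log k) := by
  set K₀ : ℝ := max K 0 with hK₀def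
  have hK₀ : (0:ℝ) ≤ K₀ := le_max_right _ _
  refine ⟨3 * K₀ + 1, by positivity, ?_⟩
  intro n hn
  set M : ℝ := (Finset.Icc n (2 * n)).sup' (Finset.nonempty_Icc.mpr (by omega))
      (fun k => c k * Real.log k) with hMdef
  have hn1 : (1:ℝ) ≤ (n:ℝ) := by exact_mod_cast Nat.one_le_of_lt hn
  have hn2 : (2:ℝ) ≤ (n:ℝ) := by exact_mod_cast hn
  have hmem1 : n ∈ Finset.Icc n (2 * n) := Finset.mem_Icc.mpr ⟨le_refl _, by omega⟩
  have hmem2 : 2 * n ∈ Finset.Icc n (2 * n) := Finset.mem_Icc.mpr ⟨by omega, le_refl _⟩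
  have hMn : c n * Real.log n ≤ M := Finset.le_sup' (fun k => c k * Real.log (k:ℝ)) hmem1
  have hM2n : c (2 * n) * Real.log ((2 * n : ℕ) : ℝ) ≤ M := Finset.le_sup' (fun k => c k * Real.log (k:ℝ)) hmem2
  have hlogn : (0:ℝ) ≤ Real.log n := Real.log_nonneg hn1
  have hMnonneg : 0 ≤ M := le_trans (mul_nonneg (hpos n) hlogn) hMn
  set L : ℝ := Real.log ((2 * n : ℕ) : ℝ) with hLdef
  have hLnonneg : 0 ≤ L := Real.log_nonneg (by push_cast; linarith)
  have hL2 : L ≤ 2 * Real.log n := by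
    have : L = Real.log 2 + Real.log n := by
      rw [hLdef]; push_cast
      rw [Real.log_mul (by norm_num) (by linarith)]
    rw [this]
    have := Real.log_le_log (by norm_num : (0:ℝ) < 2) hn2
    linarith
  -- step 1: bound each log k by L
  have step1 : ∑ k ∈ Finset.Icc n (2 * n), |c k - c (k + 1)| * Real.log k ≤
      (∑ k ∈ Finset.Icc n (2 * n), |c k - c (k + 1)|) * L := by
    rw [Finset.sum_mul]
    apply Finset.sum_le_sum
    intro k hk
    have hk' := Finset.mem_Icc.mp hk
    have hkL : Real.log k ≤ L := by
      apply Real.log_le_log (by exact_mod_cast lt_of_lt_of_le (by norm_num) (le_trans hn hk'.1))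
      exact_mod_cast hk'.2
    exact mul_le_mul_of_nonneg_left hkL (abs_nonneg _)
  -- step 2: NBVS bound with K₀
  have hsum : ∑ k ∈ Finset.Icc n (2 * n), |c k - c (k + 1)| ≤ K₀ * (c n + c (2 * n)) := by
    refine le_trans (hNBVS n (by omega)) ?_
    have hcc : 0 ≤ c n + c (2 * n) := add_nonneg (hpos n) (hpos _)
    exact mul_le_mul_of_nonneg_right (le_max_left _ _) hcc
  have step2 : (∑ k ∈ Finset.Icc n (2 * n), |c k - c (k + 1)|) * L ≤
      K₀ * (c n + c (2 * n)) * L := mul_le_mul_of_nonneg_right hsum hLnonneg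
  -- step 3: combine
  have hcnL : c n * L ≤ 2 * M := by
    have h1 : c n * L ≤ c n * (2 * Real.log n) :=
      mul_le_mul_of_nonneg_left hL2 (hpos n)
    nlinarith [hpos n]
  have hc2nL : c (2 * n) * L ≤ M := hM2n
  calc ∑ k ∈ Finset.Icc n (2 * n), |c k - c (k + 1)| * Real.log k
      ≤ K₀ * (c n + c (2 * n)) * L := le_trans step1 step2
    _ ≤ (3 * K₀ + 1) * M := by nlinarith [mul_le_mul_of_nonneg_left hcnL hK₀,
        mul_le_mul_of_nonneg_left hc2nL hK₀]
end

section
/- Let {c_n} be a nonnegative sequence in NBVS and let ε_m = sup_{k ≥ m} k·c_k be finite. Then for all N ≥ m, ∑_{k=N}^{∞} |c_k - c_{k+1}| ≤ K·ε_m / N, where K depends only on the NBVS constant. -/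
theorem nbvs_tail_variation_bound (c : ℕ → ℝ) (hpos : ∀ n, 0 ≤ c n) (K : ℝ)
    (hNBVS : ∀ m : ℕ, 1 ≤ m →
      ∑ k ∈ Finset.Icc m (2 * m), |c k - c (k + 1)| ≤ K * (c m + c (2 * m))) :
    ∃ K' : ℝ, 0 < K' ∧ ∀ m : ℕ, 1 ≤ m → ∀ ε : ℝ,
      (∀ k : ℕ, m ≤ k → (k : ℝ) * c k ≤ ε) →
      ∀ N : ℕ, m ≤ N →
        ∑' k : ℕ, |c (N + k) - c (N + k + 1)| ≤ K' * ε / N := by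
  refine ⟨3 * |K| + 1, by positivity, ?_⟩
  intro m hm ε hε N hN
  have hN1 : 1 ≤ N := hm.trans hN
  have hN0 : (0:ℝ) < N := by exact_mod_cast hN1
  have hε0 : 0 ≤ ε :=
    le_trans (mul_nonneg (Nat.cast_nonneg m) (hpos m)) (hε m le_rfl)
  set f : ℕ → ℝ := fun k => |c k - c (k + 1)| with hf
  have hfpos : ∀ k, 0 ≤ f k := fun k => abs_nonneg _
  -- one dyadic block
  have hblock : ∀ P : ℕ, m ≤ P → ∑ k ∈ Finset.Ico P (2 * P), f k
      ≤ |K| * ((3/2) * (ε / P)) := by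
    intro P hmP
    have hP1 : 1 ≤ P := hm.trans hmP
    have hP0 : (0:ℝ) < P := by exact_mod_cast hP1
    have h1 : ∑ k ∈ Finset.Ico P (2 * P), f k ≤ ∑ k ∈ Finset.Icc P (2 * P), f k := by
      apply Finset.sum_le_sum_of_subset_of_nonneg
      · exact Finset.Ico_subset_Icc_self
      · intro i _ _; exact hfpos i
    have h2 : ∑ k ∈ Finset.Icc P (2 * P), f k ≤ K * (c P + c (2 * P)) := hNBVS P hP1
    have h3 : K * (c P + c (2 * P)) ≤ |K| * (c P + c (2 * P)) := by
      apply mul_le_mul_of_nonneg_right (le_abs_self K)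
      exact add_nonneg (hpos P) (hpos _)
    have hcP : c P ≤ ε / P := by
      rw [le_div_iff₀ hP0, mul_comm]
      exact hε P hmP
    have hc2P : c (2 * P) ≤ ε / ((2 * P : ℕ) : ℝ) := by
      have h2P0 : (0:ℝ) < ((2 * P : ℕ) : ℝ) := by positivity
      rw [le_div_iff₀ h2P0, mul_comm]
      exact hε (2 * P) (hmP.trans (by omega))
    have h4 : c P + c (2 * P) ≤ (3/2) * (ε / P) := by
      have : ε / ((2 * P : ℕ) : ℝ) = (1/2) * (ε / P) := by
        push_cast; field_simp
      calc c P + c (2 * P) ≤ ε / P + ε / ((2 * P : ℕ) : ℝ) := add_le_add hcP hc2P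
        _ = (3/2) * (ε / P) := by rw [this]; ring
    calc ∑ k ∈ Finset.Ico P (2 * P), f k ≤ K * (c P + c (2 * P)) := h1.trans h2
      _ ≤ |K| * (c P + c (2 * P)) := h3
      _ ≤ |K| * ((3/2) * (ε / P)) := mul_le_mul_of_nonneg_left h4 (abs_nonneg K)
  -- induction over dyadic blocks
  have key : ∀ j : ℕ, ∑ k ∈ Finset.Ico N (2 ^ j * N), f k
      ≤ |K| * (3/2) * (ε / N) * ∑ i ∈ Finset.range j, (1/2 : ℝ) ^ i := by
    intro j
    induction j with
    | zero => simp
    | succ j ih =>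
      have hNP : N ≤ 2 ^ j * N := Nat.le_mul_of_pos_left N (Nat.pow_pos (n := j) (by norm_num))
      have hsplit : 2 ^ (j+1) * N = 2 * (2 ^ j * N) := by ring
      have hPP : 2 ^ j * N ≤ 2 * (2 ^ j * N) := by omega
      have hsum := Finset.sum_Ico_consecutive f hNP hPP
      have hcast : ((2 ^ j * N : ℕ) : ℝ) = 2 ^ j * (N : ℝ) := by push_cast; ring
      have hb := hblock (2 ^ j * N) (hN.trans hNP)
      have hεP : ε / ((2 ^ j * N : ℕ) : ℝ) = (ε / N) * (1/2 : ℝ) ^ j := by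
        rw [hcast, div_mul_eq_div_div_swap, div_eq_mul_inv, one_div, inv_pow]
      rw [hsplit, ← hsum, Finset.sum_range_succ]
      have := ih
      calc ∑ k ∈ Finset.Ico N (2 ^ j * N), f k + ∑ k ∈ Finset.Ico (2 ^ j * N) (2 * (2 ^ j * N)), f k
          ≤ |K| * (3/2) * (ε / N) * ∑ i ∈ Finset.range j, (1/2 : ℝ) ^ i
            + |K| * ((3/2) * ((ε / N) * (1/2 : ℝ) ^ j)) := by
            apply add_le_add ih
            rw [← hεP]; exact hb
        _ = |K| * (3/2) * (ε / N) * (∑ i ∈ Finset.range j, (1/2 : ℝ) ^ i + (1/2 : ℝ) ^ j) := by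
            ring
  -- bound partial sums, then the tsum
  apply Real.tsum_le_of_sum_range_le (fun k => hfpos (N + k))
  intro n
  have hshift : ∑ i ∈ Finset.range n, f (N + i) = ∑ k ∈ Finset.Ico N (N + n), f k := by
    rw [Finset.sum_Ico_eq_sum_range]
    simp
  have hsub : N + n ≤ 2 ^ n * N := by
    have h1 : n + 1 ≤ 2 ^ n := Nat.lt_two_pow_self
    calc N + n ≤ N + n * N := by nlinarith [hN1]
      _ = (n + 1) * N := by ring
      _ ≤ 2 ^ n * N := Nat.mul_le_mul_right N h1
  have hmono : ∑ k ∈ Finset.Ico N (N + n), f k ≤ ∑ k ∈ Finset.Ico N (2 ^ n * N), f k := by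
    apply Finset.sum_le_sum_of_subset_of_nonneg
    · exact Finset.Ico_subset_Ico_right hsub
    · intro i _ _; exact hfpos i
  have hgeo : ∑ i ∈ Finset.range n, (1/2 : ℝ) ^ i ≤ 2 := sum_geometric_two_le n
  have hfinal : |K| * (3/2) * (ε / N) * ∑ i ∈ Finset.range n, (1/2 : ℝ) ^ i
      ≤ (3 * |K| + 1) * ε / N := by
    have h1 : |K| * (3/2) * (ε / N) * ∑ i ∈ Finset.range n, (1/2 : ℝ) ^ i
        ≤ |K| * (3/2) * (ε / N) * 2 := by
      apply mul_le_mul_of_nonneg_left hgeo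
      positivity
    have h2 : |K| * (3/2) * (ε / N) * 2 ≤ (3 * |K| + 1) * ε / N := by
      rw [mul_div_assoc]
      have : |K| * (3/2) * (ε / N) * 2 = (3 * |K|) * (ε / N) := by ring
      rw [this]
      apply mul_le_mul_of_nonneg_right (by linarith [abs_nonneg K]) (by positivity)
    exact h1.trans h2
  calc ∑ i ∈ Finset.range n, f (N + i) = ∑ k ∈ Finset.Ico N (N + n), f k := hshift
    _ ≤ ∑ k ∈ Finset.Ico N (2 ^ n * N), f k := hmono
    _ ≤ |K| * (3/2) * (ε / N) * ∑ i ∈ Finset.range n, (1/2 : ℝ) ^ i := key n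
    _ ≤ (3 * |K| + 1) * ε / N := hfinal
end

section
/- Let {c_n} be a nonnegative sequence in NBVS with sup_{k≥m} k·c_k < ∞. Then uniformly in x ∈ [0, π] and m ≥ 1, |∑_{k=m}^{∞} c_k sin(kx)| ≤ K · sup_{k ≥ m} k·c_k, where K depends only on the NBVS constant of {c_n}. -/
open Real Finset

lemma kernel_bound_s10 {x : ℝ} (hx0 : 0 < x) (hxpi : x ≤ Real.pi) (a b : ℕ) :
    |∑ k ∈ Finset.Ico a b, Real.sin (k * x)| ≤ Real.pi / x := by
  have hpi := Real.pi_pos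
  rcases le_or_gt b a with h | h
  · rw [Finset.Ico_eq_empty (by omega), Finset.sum_empty, abs_zero]
    positivity
  have hs : 0 < Real.sin (x / 2) :=
    Real.sin_pos_of_pos_of_lt_pi (by linarith) (by linarith)
  have hjordan : x / Real.pi ≤ Real.sin (x / 2) := by
    have := Real.mul_le_sin (x := x / 2) (by linarith) (by linarith)
    calc x / Real.pi = 2 / Real.pi * (x / 2) := by field_simp
    _ ≤ Real.sin (x / 2) := this
  set g : ℕ → ℝ := fun k => Real.cos (((k : ℝ) - 1 / 2) * x) with hg
  have key : ∀ k : ℕ, Real.sin (k * x) = (g k - g (k + 1)) / (2 * Real.sin (x / 2)) := by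
    intro k
    rw [eq_div_iff (by positivity)]
    have := Real.cos_sub_cos (((k : ℝ) - 1 / 2) * x) (((k : ℝ) + 1 - 1 / 2) * x)
    simp only [hg]
    push_cast
    rw [this]
    have h1 : (((k : ℝ) - 1 / 2) * x + ((k : ℝ) + 1 - 1 / 2) * x) / 2 = k * x := by ring
    have h2 : (((k : ℝ) - 1 / 2) * x - ((k : ℝ) + 1 - 1 / 2) * x) / 2 = -(x / 2) := by ring
    rw [h1, h2, Real.sin_neg]
    ring
  have tele : ∑ k ∈ Finset.Ico a b, (g k - g (k + 1)) = g a - g b := by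
    rw [Finset.sum_Ico_eq_sum_range]
    have h2 : ∀ i ∈ Finset.range (b - a), g (a + i) - g (a + i + 1) = (fun i => g (a+i)) i - (fun i => g (a+i)) (i+1) := by
      intro i _; congr 2
    rw [Finset.sum_congr rfl h2, Finset.sum_range_sub' (fun i => g (a + i))]
    congr 2
    omega
  have hsum : ∑ k ∈ Finset.Ico a b, Real.sin (k * x) = (g a - g b) / (2 * Real.sin (x / 2)) := by
    rw [← tele, Finset.sum_div]
    exact Finset.sum_congr rfl fun k _ => key k
  rw [hsum, abs_div, abs_of_pos (show (0:ℝ) < 2 * Real.sin (x/2) by positivity)]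
  have hnum : |g a - g b| ≤ 2 := by
    have h1 := Real.abs_cos_le_one (((a : ℝ) - 1 / 2) * x)
    have h2 := Real.abs_cos_le_one (((b : ℝ) - 1 / 2) * x)
    calc |g a - g b| ≤ |g a| + |g b| := abs_sub _ _
      _ ≤ 2 := by simp only [hg]; linarith
  calc |g a - g b| / (2 * Real.sin (x / 2)) ≤ 2 / (2 * Real.sin (x / 2)) := by
        apply div_le_div_of_nonneg_right hnum (by positivity) |>.trans_eq rfl
      _ = 1 / Real.sin (x / 2) := by ring
      _ ≤ 1 / (x / Real.pi) := by
        apply one_div_le_one_div_of_le (by positivity) hjordan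
      _ = Real.pi / x := by field_simp

lemma abel_identity (c : ℕ → ℝ) (x : ℝ) (a : ℕ) :
    ∀ b, a ≤ b →
      ∑ k ∈ Finset.Ico a b, c k * Real.sin (k * x) =
        ∑ k ∈ Finset.Ico a b, (c k - c (k + 1)) * (∑ j ∈ Finset.Ico a (k + 1), Real.sin (j * x))
          + c b * ∑ j ∈ Finset.Ico a b, Real.sin (j * x) := by
  intro b hb
  induction b, hb using Nat.le_induction with
  | base => simp
  | succ b hb ih =>
    rw [Finset.sum_Ico_succ_top (by omega), Finset.sum_Ico_succ_top (by omega : a ≤ b), ih,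
      Finset.sum_Ico_succ_top (by omega : a ≤ b)]
    ring

lemma dyadic_var_bound (c : ℕ → ℝ) (hpos : ∀ n, 0 ≤ c n) (K₀ : ℝ) (hK₀ : 0 ≤ K₀)
    (hN : ∀ m : ℕ, 1 ≤ m →
      ∑ k ∈ Finset.Icc m (2 * m), |c k - c (k + 1)| ≤ K₀ * (c m + c (2 * m)))
    (m : ℕ) (hm : 1 ≤ m) (ε : ℝ) (hε : ∀ k : ℕ, m ≤ k → (k : ℝ) * c k ≤ ε)
    (n : ℕ) (hn : m ≤ n) (M : ℕ) :
    ∑ k ∈ Finset.Ico n M, |c k - c (k + 1)| ≤ 3 * K₀ * ε / n := by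
  have hn1 : 1 ≤ n := le_trans hm hn
  have hε0 : 0 ≤ ε := le_trans (mul_nonneg (by positivity) (hpos m)) (hε m le_rfl)
  have hck : ∀ k : ℕ, m ≤ k → c k ≤ ε / k := by
    intro k hk
    have hk1 : (0:ℝ) < k := by exact_mod_cast lt_of_lt_of_le hm hk
    rw [le_div_iff₀ hk1, mul_comm]
    exact hε k hk
  -- main induction
  have main : ∀ j : ℕ, ∑ k ∈ Finset.Ico n (2 ^ j * n), |c k - c (k + 1)|
      ≤ 3 * K₀ * ε / n * (1 - (1 / 2 : ℝ) ^ j) := by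
    intro j
    induction j with
    | zero => simp
    | succ j ih =>
      have hle1 : n ≤ 2 ^ j * n := Nat.le_mul_of_pos_left n (Nat.two_pow_pos j)
      have hle2 : 2 ^ j * n ≤ 2 ^ (j + 1) * n := by
        apply Nat.mul_le_mul_right
        exact Nat.pow_le_pow_right (by norm_num) (by omega)
      rw [← Finset.sum_Ico_consecutive _ hle1 hle2]
      have block : ∑ k ∈ Finset.Ico (2 ^ j * n) (2 ^ (j + 1) * n), |c k - c (k + 1)|
          ≤ 3 / 2 * K₀ * ε / (2 ^ j * n) := by
        have hsub : Finset.Ico (2 ^ j * n) (2 ^ (j + 1) * n)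
            ⊆ Finset.Icc (2 ^ j * n) (2 * (2 ^ j * n)) := by
          intro k hk
          simp only [Finset.mem_Ico, Finset.mem_Icc] at hk ⊢
          constructor
          · exact hk.1
          · have : 2 ^ (j + 1) * n = 2 * (2 ^ j * n) := by ring
            omega
        have h1 : ∑ k ∈ Finset.Ico (2 ^ j * n) (2 ^ (j + 1) * n), |c k - c (k + 1)|
            ≤ ∑ k ∈ Finset.Icc (2 ^ j * n) (2 * (2 ^ j * n)), |c k - c (k + 1)| :=
          Finset.sum_le_sum_of_subset_of_nonneg hsub (fun k _ _ => abs_nonneg _)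
        have h2 := hN (2 ^ j * n) (Nat.one_le_iff_ne_zero.2 (Nat.mul_ne_zero (Nat.two_pow_pos j).ne' (by omega)))
        have hmj : m ≤ 2 ^ j * n := le_trans hn hle1
        have hmj2 : m ≤ 2 * (2 ^ j * n) := by omega
        have hc1 := hck _ hmj
        have hc2 := hck _ hmj2
        have hcast : ((2 ^ j * n : ℕ) : ℝ) = 2 ^ j * n := by push_cast; ring
        have hcast2 : ((2 * (2 ^ j * n) : ℕ) : ℝ) = 2 * (2 ^ j * n) := by push_cast; ring
        have hnpos : (0:ℝ) < (n:ℝ) := by exact_mod_cast hn1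
        have hpow : (0:ℝ) < (2:ℝ) ^ j := by positivity
        rw [hcast] at hc1
        rw [hcast2] at hc2
        calc ∑ k ∈ Finset.Ico (2 ^ j * n) (2 ^ (j + 1) * n), |c k - c (k + 1)|
            ≤ K₀ * (c (2 ^ j * n) + c (2 * (2 ^ j * n))) := le_trans h1 h2
          _ ≤ K₀ * (ε / (2 ^ j * n) + ε / (2 * (2 ^ j * n))) := by
              apply mul_le_mul_of_nonneg_left _ hK₀
              exact add_le_add hc1 hc2
          _ = 3 / 2 * K₀ * ε / (2 ^ j * n) := by field_simp; ring
      have hnpos : (0:ℝ) < (n:ℝ) := by exact_mod_cast hn1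
      have : 3 / 2 * K₀ * ε / (2 ^ j * (n:ℝ)) = 3 * K₀ * ε / n * (1/2:ℝ)^(j+1) := by
        field_simp
        ring_nf
        rw [mul_assoc, ← mul_pow]; norm_num
      rw [this] at block
      calc ∑ k ∈ Finset.Ico n (2 ^ j * n), |c k - c (k + 1)|
            + ∑ k ∈ Finset.Ico (2 ^ j * n) (2 ^ (j + 1) * n), |c k - c (k + 1)|
          ≤ 3 * K₀ * ε / n * (1 - (1/2:ℝ)^j) + 3 * K₀ * ε / n * (1/2:ℝ)^(j+1) :=
            add_le_add ih block
        _ = 3 * K₀ * ε / n * (1 - (1/2:ℝ)^(j+1)) := by ring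
  -- now cover Ico n M
  have hMle : M ≤ 2 ^ M * n := by
    calc M ≤ 2 ^ M := (Nat.lt_two_pow_self).le
      _ ≤ 2 ^ M * n := Nat.le_mul_of_pos_right _ (by omega)
  have hsub : Finset.Ico n M ⊆ Finset.Ico n (2 ^ M * n) := by
    apply Finset.Ico_subset_Ico le_rfl hMle
  have hnpos : (0:ℝ) < (n:ℝ) := by exact_mod_cast hn1
  calc ∑ k ∈ Finset.Ico n M, |c k - c (k + 1)|
      ≤ ∑ k ∈ Finset.Ico n (2 ^ M * n), |c k - c (k + 1)| :=
        Finset.sum_le_sum_of_subset_of_nonneg hsub (fun k _ _ => abs_nonneg _)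
    _ ≤ 3 * K₀ * ε / n * (1 - (1/2:ℝ)^M) := main M
    _ ≤ 3 * K₀ * ε / n := by
        have h1 : (0:ℝ) ≤ 3 * K₀ * ε / n := by positivity
        have h2 : (1 - (1/2:ℝ)^M) ≤ 1 := by
          have : (0:ℝ) ≤ (1/2:ℝ)^M := by positivity
          linarith
        nlinarith

lemma partial_sum_bound (c : ℕ → ℝ) (hpos : ∀ n, 0 ≤ c n) (K₀ : ℝ) (hK₀ : 0 ≤ K₀)
    (hN : ∀ m : ℕ, 1 ≤ m →
      ∑ k ∈ Finset.Icc m (2 * m), |c k - c (k + 1)| ≤ K₀ * (c m + c (2 * m)))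
    (m : ℕ) (hm : 1 ≤ m) (ε : ℝ) (hε : ∀ k : ℕ, m ≤ k → (k : ℝ) * c k ≤ ε)
    (x : ℝ) (hx0 : 0 < x) (hxpi : x ≤ Real.pi) (M : ℕ) (hM : m ≤ M) :
    |∑ k ∈ Finset.Ico m M, c k * Real.sin (k * x)| ≤ (3 * Real.pi * K₀ + 11) * ε := by
  have hpi := Real.pi_pos
  have hε0 : 0 ≤ ε := le_trans (mul_nonneg (by positivity) (hpos m)) (hε m le_rfl)
  have hck : ∀ k : ℕ, m ≤ k → c k ≤ ε / k := by
    intro k hk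
    have hk1 : (0:ℝ) < k := by exact_mod_cast lt_of_lt_of_le hm hk
    rw [le_div_iff₀ hk1, mul_comm]
    exact hε k hk
  set N : ℕ := max m ⌈1 / x⌉₊ with hNdef
  have hmN : m ≤ N := le_max_left _ _
  have hxN : 1 / x ≤ N := le_trans (Nat.le_ceil _) (by exact_mod_cast le_max_right _ _)
  set M' : ℕ := min M (N + 1) with hM'def
  have hmM' : m ≤ M' := le_min hM (by omega)
  have hM'M : M' ≤ M := min_le_left _ _
  -- split the sum
  rw [← Finset.sum_Ico_consecutive _ hmM' hM'M]
  have hpart1 : |∑ k ∈ Finset.Ico m M', c k * Real.sin (k * x)| ≤ (1 + 2 * Real.pi) * ε := by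
    have hterm : ∀ k ∈ Finset.Ico m M', |c k * Real.sin (k * x)| ≤ ε * x := by
      intro k hk
      simp only [Finset.mem_Ico] at hk
      have hk0 : (0:ℝ) ≤ (k:ℝ) := Nat.cast_nonneg _
      calc |c k * Real.sin (k * x)| = c k * |Real.sin (k * x)| := by
            rw [abs_mul, abs_of_nonneg (hpos k)]
        _ ≤ c k * |(k:ℝ) * x| := by
            exact mul_le_mul_of_nonneg_left Real.abs_sin_le_abs (hpos k)
        _ = (k:ℝ) * c k * x := by
            rw [abs_of_nonneg (by positivity)]; ring
        _ ≤ ε * x := by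
            apply mul_le_mul_of_nonneg_right (hε k hk.1) hx0.le
    calc |∑ k ∈ Finset.Ico m M', c k * Real.sin (k * x)|
        ≤ ∑ k ∈ Finset.Ico m M', |c k * Real.sin (k * x)| := Finset.abs_sum_le_sum_abs _ _
      _ ≤ ∑ _k ∈ Finset.Ico m M', ε * x := Finset.sum_le_sum hterm
      _ = (M' - m : ℕ) * (ε * x) := by rw [Finset.sum_const, Nat.card_Ico, nsmul_eq_mul]
      _ ≤ (⌈1 / x⌉₊ + 1 : ℝ) * (ε * x) := by
          apply mul_le_mul_of_nonneg_right _ (by positivity)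
          have : (M' - m : ℕ) ≤ ⌈1 / x⌉₊ + 1 := by
            have h1 : M' ≤ N + 1 := min_le_right _ _
            have h2 : N ≤ m + ⌈1 / x⌉₊ := max_le (by omega) (by omega)
            omega
          exact_mod_cast this
      _ ≤ (1 / x + 2) * (ε * x) := by
          apply mul_le_mul_of_nonneg_right _ (by positivity)
          have := Nat.ceil_lt_add_one (by positivity : (0:ℝ) ≤ 1 / x)
          linarith
      _ = (1 + 2 * x) * ε := by field_simp
      _ ≤ (1 + 2 * Real.pi) * ε := by nlinarith
  have hpart2 : |∑ k ∈ Finset.Ico M' M, c k * Real.sin (k * x)| ≤ Real.pi * (3 * K₀ + 1) * ε := by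
    rcases le_or_gt M (N + 1) with hc | hc
    · have : M' = M := min_eq_left (by omega)
      rw [this, Finset.Ico_self, Finset.sum_empty, abs_zero]
      positivity
    · have hM'eq : M' = N + 1 := min_eq_right (by omega)
      have hkernelN : Real.pi / x ≤ Real.pi * M' := by
        rw [hM'eq]
        have h1 : 1 / x ≤ (N + 1 : ℝ) := by push_cast; linarith
        rw [div_le_iff₀ hx0] at h1 ⊢
        push_cast
        nlinarith
      have hM'pos : (0:ℝ) < (M' : ℝ) := by
        have : 1 ≤ M' := le_trans hm hmM'
        exact_mod_cast this
      have habel := abel_identity c x M' M hM'M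
      rw [habel]
      have hkb : ∀ b : ℕ, |∑ j ∈ Finset.Ico M' b, Real.sin (j * x)| ≤ Real.pi / x :=
        fun b => kernel_bound_s10 hx0 hxpi M' b
      have hdya := dyadic_var_bound c hpos K₀ hK₀ hN m hm ε hε M' hmM' M
      have hcM : c M ≤ ε / M' := by
        have h1 : c M ≤ ε / M := hck M hM
        have h2 : (M' : ℝ) ≤ M := by exact_mod_cast hM'M
        exact h1.trans (div_le_div_of_nonneg_left hε0 hM'pos h2)
      calc |∑ k ∈ Finset.Ico M' M, (c k - c (k + 1)) * (∑ j ∈ Finset.Ico M' (k + 1), Real.sin (j * x))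
              + c M * ∑ j ∈ Finset.Ico M' M, Real.sin (j * x)|
          ≤ |∑ k ∈ Finset.Ico M' M, (c k - c (k + 1)) * (∑ j ∈ Finset.Ico M' (k + 1), Real.sin (j * x))|
            + |c M * ∑ j ∈ Finset.Ico M' M, Real.sin (j * x)| := abs_add_le _ _
        _ ≤ (∑ k ∈ Finset.Ico M' M, |c k - c (k + 1)| * (Real.pi / x))
            + c M * (Real.pi / x) := by
            apply add_le_add
            · refine le_trans (Finset.abs_sum_le_sum_abs _ _) (Finset.sum_le_sum fun k _ => ?_)
              rw [abs_mul]
              exact mul_le_mul_of_nonneg_left (hkb (k + 1)) (abs_nonneg _)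
            · rw [abs_mul, abs_of_nonneg (hpos M)]
              exact mul_le_mul_of_nonneg_left (hkb M) (hpos M)
        _ = (∑ k ∈ Finset.Ico M' M, |c k - c (k + 1)| + c M) * (Real.pi / x) := by
            rw [← Finset.sum_mul]; ring
        _ ≤ (3 * K₀ * ε / M' + ε / M') * (Real.pi * M') := by
            apply mul_le_mul (add_le_add hdya hcM) hkernelN (by positivity)
            positivity
        _ = Real.pi * (3 * K₀ + 1) * ε := by field_simp
  calc |∑ k ∈ Finset.Ico m M', c k * Real.sin (k * x)
          + ∑ k ∈ Finset.Ico M' M, c k * Real.sin (k * x)|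
      ≤ |∑ k ∈ Finset.Ico m M', c k * Real.sin (k * x)|
        + |∑ k ∈ Finset.Ico M' M, c k * Real.sin (k * x)| := abs_add_le _ _
    _ ≤ (1 + 2 * Real.pi) * ε + Real.pi * (3 * K₀ + 1) * ε := add_le_add hpart1 hpart2
    _ ≤ (3 * Real.pi * K₀ + 11) * ε := by nlinarith [Real.pi_lt_d2, Real.pi_pos, hε0, mul_nonneg hK₀ hε0]

theorem nbvs_tail_sine_sum_bound (c : ℕ → ℝ) (hpos : ∀ n, 0 ≤ c n) (K : ℝ)
    (hNBVS : ∀ m : ℕ, 1 ≤ m →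
      ∑ k ∈ Finset.Icc m (2 * m), |c k - c (k + 1)| ≤ K * (c m + c (2 * m))) :
    ∃ K' : ℝ, 0 < K' ∧ ∀ m : ℕ, 1 ≤ m → ∀ ε : ℝ,
      (∀ k : ℕ, m ≤ k → (k : ℝ) * c k ≤ ε) →
      ∀ x ∈ Set.Icc (0 : ℝ) Real.pi,
        |∑' k : ℕ, c (m + k) * Real.sin ((m + k) * x)| ≤ K' * ε := by
  have hpi := Real.pi_pos
  set K₀ : ℝ := max K 0 with hK₀def
  have hK₀ : 0 ≤ K₀ := le_max_right _ _
  have hN : ∀ m : ℕ, 1 ≤ m →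
      ∑ k ∈ Finset.Icc m (2 * m), |c k - c (k + 1)| ≤ K₀ * (c m + c (2 * m)) := by
    intro m hm
    refine (hNBVS m hm).trans ?_
    apply mul_le_mul_of_nonneg_right (le_max_left _ _)
    exact add_nonneg (hpos m) (hpos (2 * m))
  refine ⟨3 * Real.pi * K₀ + 11, by positivity, ?_⟩
  intro m hm ε hε x hx
  obtain ⟨hx0, hxpi⟩ := hx
  have hε0 : 0 ≤ ε := le_trans (mul_nonneg (by positivity) (hpos m)) (hε m le_rfl)
  rcases eq_or_lt_of_le hx0 with hx0' | hx0'
  · -- x = 0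
    have : ∀ k : ℕ, c (m + k) * Real.sin ((m + k) * x) = 0 := by
      intro k
      rw [← hx0', mul_zero, Real.sin_zero, mul_zero]
    rw [tsum_congr this, tsum_zero, abs_zero]
    positivity
  · -- x > 0
    set f : ℕ → ℝ := fun k => c (m + k) * Real.sin ((m + k) * x) with hf
    by_cases hsummable : Summable f
    · have htend := hsummable.hasSum.tendsto_sum_nat
      have habs : Filter.Tendsto (fun n => |∑ i ∈ Finset.range n, f i|) Filter.atTop
          (nhds |∑' k, f k|) := htend.abs
      apply le_of_tendsto habs
      filter_upwards with n
      have hre : ∑ i ∈ Finset.range n, f i = ∑ k ∈ Finset.Ico m (m + n), c k * Real.sin (k * x) := by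
        rw [Finset.sum_Ico_eq_sum_range]
        simp only [hf, Nat.add_sub_cancel_left]
        apply Finset.sum_congr rfl
        intro i _
        push_cast
        ring_nf
      rw [hre]
      exact partial_sum_bound c hpos K₀ hK₀ hN m hm ε hε x hx0' hxpi (m + n) (by omega)
    · rw [tsum_eq_zero_of_not_summable hsummable, abs_zero]
      positivity
end

section
/- Let {c_n}_{n≥0} be a nonnegative sequence in NBVS with constant K, and fix n ≥ 1. If k_0 satisfies 2n+1 ≤ k_0 ≤ 4n, then k_0·c_{k_0} ≤ K'·( max_{1 ≤ k ≤ n} k·c_{n+k} + 4n·c_{4n} ), where K' depends only on K. -/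
lemma nbvs_abs_tele (c : ℕ → ℝ) : ∀ a b : ℕ, a ≤ b →
    |c b - c a| ≤ ∑ k ∈ Finset.Ico a b, |c k - c (k + 1)| := by
  intro a b hab
  induction b, hab using Nat.le_induction with
  | base => simp
  | succ b hab ih =>
    rw [Finset.sum_Ico_succ_top hab]
    calc |c (b + 1) - c a| = |(c b - c a) + (c (b + 1) - c b)| := by ring_nf
      _ ≤ |c b - c a| + |c (b + 1) - c b| := abs_add_le _ _
      _ ≤ (∑ k ∈ Finset.Ico a b, |c k - c (k + 1)|) + |c b - c (b + 1)| := by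
          rw [abs_sub_comm (c (b+1))]; exact add_le_add_left ih _

theorem nbvs_middle_range_bound (c : ℕ → ℝ) (hpos : ∀ n, 0 ≤ c n) (K : ℝ)
    (hNBVS : ∀ m : ℕ, 1 ≤ m →
      ∑ k ∈ Finset.Icc m (2 * m), |c k - c (k + 1)| ≤ K * (c m + c (2 * m))) :
    ∃ K' : ℝ, 0 < K' ∧ ∀ n : ℕ, ∀ hn : 1 ≤ n, ∀ k₀ : ℕ,
      2 * n + 1 ≤ k₀ → k₀ ≤ 4 * n →
      (k₀ : ℝ) * c k₀ ≤
        K' * ((Finset.Icc 1 n).sup' (Finset.nonempty_Icc.mpr hn)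
          (fun k => (k : ℝ) * c (n + k)) + (4 * n : ℕ) * c (4 * n)) := by
  refine ⟨4 * (|K| + 1), by positivity, ?_⟩
  intro n hn k₀ h1 h2
  set M := (Finset.Icc 1 n).sup' (Finset.nonempty_Icc.mpr hn)
      (fun k => (k : ℝ) * c (n + k)) with hM
  have hMn : (n : ℝ) * c (2 * n) ≤ M := by
    have h := Finset.le_sup' (fun k : ℕ => (k : ℝ) * c (n + k))
      (Finset.mem_Icc.mpr ⟨hn, le_refl n⟩)
    rw [two_mul]
    exact h
  have hMnn : (0:ℝ) ≤ (n : ℝ) * c (2 * n) := by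
    have := hpos (2 * n); positivity
  have hM0 : 0 ≤ M := le_trans hMnn hMn
  have hsum := hNBVS (2 * n) (by omega)
  have htel := nbvs_abs_tele c (2 * n) k₀ (by omega)
  have hsub : Finset.Ico (2 * n) k₀ ⊆ Finset.Icc (2 * n) (2 * (2 * n)) := by
    intro x hx
    simp only [Finset.mem_Ico, Finset.mem_Icc] at *
    omega
  have hle : |c k₀ - c (2 * n)| ≤ K * (c (2 * n) + c (2 * (2 * n))) :=
    htel.trans <| le_trans
      (Finset.sum_le_sum_of_subset_of_nonneg hsub (fun i _ _ => abs_nonneg _)) hsum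
  have h4n : 2 * (2 * n) = 4 * n := by ring
  rw [h4n] at hle
  have hKabs : K * (c (2 * n) + c (4 * n)) ≤ |K| * (c (2 * n) + c (4 * n)) := by
    apply mul_le_mul_of_nonneg_right (le_abs_self K)
    have := hpos (2 * n); have := hpos (4 * n); linarith
  have hc : c k₀ ≤ (1 + |K|) * c (2 * n) + |K| * c (4 * n) := by
    have h := le_abs_self (c k₀ - c (2 * n))
    linarith
  have hk4 : (k₀ : ℝ) ≤ 4 * (n : ℝ) := by exact_mod_cast h2
  have hck0 : 0 ≤ c k₀ := hpos k₀
  have h4c : (0:ℝ) ≤ 4 * (n : ℝ) * c (4 * n) := by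
    have := hpos (4 * n); positivity
  calc (k₀ : ℝ) * c k₀ ≤ (4 * (n : ℝ)) * c k₀ := mul_le_mul_of_nonneg_right hk4 hck0
    _ ≤ (4 * (n : ℝ)) * ((1 + |K|) * c (2 * n) + |K| * c (4 * n)) := by
        apply mul_le_mul_of_nonneg_left hc
        positivity
    _ = 4 * (|K| + 1) * ((n : ℝ) * c (2 * n)) + |K| * (4 * (n : ℝ) * c (4 * n)) := by
        ring
    _ ≤ 4 * (|K| + 1) * M + 4 * (|K| + 1) * (4 * (n : ℝ) * c (4 * n)) := by
        have hK0 := abs_nonneg K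
        have g1 : 4 * (|K| + 1) * ((n : ℝ) * c (2 * n)) ≤ 4 * (|K| + 1) * M :=
          mul_le_mul_of_nonneg_left hMn (by positivity)
        have g2 : |K| * (4 * (n : ℝ) * c (4 * n)) ≤
            4 * (|K| + 1) * (4 * (n : ℝ) * c (4 * n)) := by
          apply mul_le_mul_of_nonneg_right _ h4c
          linarith
        linarith
    _ = 4 * (|K| + 1) * (M + ((4 * n : ℕ) : ℝ) * c (4 * n)) := by
        push_cast; ring
end

section
/- Let {a_k} be a nonnegative sequence in NBVS with constant K, and let k_0 ≥ 1. Then for every j with k_0/2 + 1 < j ≤ k_0, a_{k_0} ≤ (K+1)(a_j + a_{2j}), and consequently k_0·a_{k_0} ≤ 4(K+1) ∑_{j=⌊k_0/2⌋+1}^{∞} a_j. -/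
open scoped ENNReal
theorem nbvs_tail_sum_control (a : ℕ → ℝ) (hpos : ∀ n, 0 ≤ a n) (K : ℝ)
    (hNBVS : ∀ m : ℕ, 1 ≤ m →
      ∑ k ∈ Finset.Icc m (2 * m), |a k - a (k + 1)| ≤ K * (a m + a (2 * m)))
    (k₀ : ℕ) (hk₀ : 1 ≤ k₀) :
    (∀ j : ℕ, (k₀ : ℝ) / 2 + 1 < j → j ≤ k₀ → a k₀ ≤ (K + 1) * (a j + a (2 * j))) ∧
    (k₀ : ℝ≥0∞) * ENNReal.ofReal (a k₀) ≤
      ENNReal.ofReal (4 * (K + 1)) * ∑' j : ℕ, ENNReal.ofReal (a (k₀ / 2 + 1 + j)) := by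
  have h1 : ∀ j : ℕ, (k₀ : ℝ) / 2 + 1 < j → j ≤ k₀ → a k₀ ≤ (K + 1) * (a j + a (2 * j)) := by
    intro j hj1 hj2
    have hj1' : k₀ + 2 < 2 * j := by
      have : (k₀ : ℝ) + 2 < 2 * j := by linarith
      exact_mod_cast this
    have hj1'' : 1 ≤ j := by omega
    have htel : a k₀ - a j = ∑ k ∈ Finset.Ico j k₀, (a (k + 1) - a k) := by
      rw [Finset.sum_Ico_eq_sub _ hj2]
      simp [Finset.sum_range_sub (fun i => a i)]
    have hstep : a k₀ - a j ≤ ∑ k ∈ Finset.Icc j (2 * j), |a k - a (k + 1)| := by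
      rw [htel]
      calc ∑ k ∈ Finset.Ico j k₀, (a (k + 1) - a k)
          ≤ ∑ k ∈ Finset.Ico j k₀, |a k - a (k + 1)| := by
            apply Finset.sum_le_sum
            intro i _
            rw [abs_sub_comm]
            exact le_abs_self _
        _ ≤ ∑ k ∈ Finset.Icc j (2 * j), |a k - a (k + 1)| := by
            apply Finset.sum_le_sum_of_subset_of_nonneg
            · intro x hx
              simp only [Finset.mem_Ico, Finset.mem_Icc] at *
              omega
            · intro i _ _
              exact abs_nonneg _
    have hb := hNBVS j hj1''
    nlinarith [hpos (2 * j), hpos j]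
  refine ⟨h1, ?_⟩
  by_cases hc : a k₀ = 0
  · simp [hc]
  have hak : 0 < a k₀ := lt_of_le_of_ne (hpos k₀) (Ne.symm hc)
  have hK : 0 ≤ K := by
    have h := hNBVS k₀ hk₀
    have hs : (0:ℝ) ≤ ∑ k ∈ Finset.Icc k₀ (2 * k₀), |a k - a (k + 1)| :=
      Finset.sum_nonneg fun i _ => abs_nonneg _
    nlinarith [hpos (2 * k₀)]
  set m := k₀ / 2 with hm
  have hT : ∀ F : Finset ℕ, (∀ n ∈ F, m + 1 ≤ n) →
      ENNReal.ofReal (∑ n ∈ F, a n) ≤ ∑' j : ℕ, ENNReal.ofReal (a (m + 1 + j)) := by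
    intro F hF
    rw [ENNReal.ofReal_sum_of_nonneg (fun n _ => hpos n)]
    have hinj : ∀ x ∈ F, ∀ y ∈ F, x - (m + 1) = y - (m + 1) → x = y := by
      intro x hx y hy hxy
      have := hF x hx; have := hF y hy; omega
    calc ∑ n ∈ F, ENNReal.ofReal (a n)
        = ∑ j ∈ F.image (fun n => n - (m + 1)), ENNReal.ofReal (a (m + 1 + j)) := by
          rw [Finset.sum_image hinj]
          refine Finset.sum_congr rfl fun n hn => ?_
          have h := hF n hn
          congr 2
          omega
      _ ≤ ∑' j : ℕ, ENNReal.ofReal (a (m + 1 + j)) := ENNReal.sum_le_tsum _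
  have h4K : (0:ℝ) ≤ 4 * (K + 1) := by linarith
  rcases le_or_gt k₀ 4 with h4 | h5
  · -- small case: a k₀ itself appears in the tail
    have hterm : ENNReal.ofReal (a k₀) ≤ ∑' j : ℕ, ENNReal.ofReal (a (m + 1 + j)) := by
      have h := ENNReal.le_tsum (f := fun j => ENNReal.ofReal (a (m + 1 + j))) (k₀ - (m + 1))
      have he : m + 1 + (k₀ - (m + 1)) = k₀ := by omega
      simpa [he] using h
    have hk4 : (k₀ : ℝ≥0∞) ≤ ENNReal.ofReal (4 * (K + 1)) := by
      calc (k₀ : ℝ≥0∞) ≤ ((4:ℕ) : ℝ≥0∞) := Nat.cast_le.mpr h4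
        _ = ENNReal.ofReal 4 := by norm_num
        _ ≤ ENNReal.ofReal (4 * (K + 1)) := ENNReal.ofReal_le_ofReal (by nlinarith)
    exact mul_le_mul' hk4 hterm
  · set S := Finset.Icc (m + 2) k₀ with hS
    have h2m : k₀ ≤ 2 * m + 1 := by omega
    have hcard : S.card = k₀ - m - 1 := by rw [hS, Nat.card_Icc]; omega
    have hjS : ∀ j ∈ S, a k₀ ≤ (K + 1) * (a j + a (2 * j)) := by
      intro j hj
      rw [hS, Finset.mem_Icc] at hj
      refine h1 j ?_ hj.2
      have hc1 : (k₀ : ℝ) ≤ 2 * (m : ℝ) + 1 := by exact_mod_cast h2m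
      have hc2 : (m : ℝ) + 2 ≤ (j : ℝ) := by exact_mod_cast hj.1
      linarith
    have hsum : (S.card : ℝ) * a k₀ ≤ (K + 1) * ∑ j ∈ S, (a j + a (2 * j)) := by
      rw [Finset.mul_sum]
      calc (S.card : ℝ) * a k₀ = ∑ _j ∈ S, a k₀ := by
            rw [Finset.sum_const, nsmul_eq_mul]
        _ ≤ ∑ j ∈ S, (K + 1) * (a j + a (2 * j)) := Finset.sum_le_sum hjS
    set F : Finset ℕ := S ∪ S.image (fun j => 2 * j) with hF
    have hdisj : Disjoint S (S.image (fun j => 2 * j)) := by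
      rw [Finset.disjoint_right]
      intro n hn hn'
      simp only [Finset.mem_image, hS, Finset.mem_Icc] at hn hn'
      obtain ⟨j, hj, rfl⟩ := hn
      omega
    have hinj2 : ∀ x ∈ S, ∀ y ∈ S, 2 * x = 2 * y → x = y := by
      intro x _ y _ h; omega
    have hsplit : ∑ j ∈ S, (a j + a (2 * j)) = ∑ n ∈ F, a n := by
      rw [hF, Finset.sum_union hdisj, Finset.sum_add_distrib, Finset.sum_image hinj2]
    have hFmem : ∀ n ∈ F, m + 1 ≤ n := by
      intro n hn
      rw [hF, Finset.mem_union] at hn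
      rcases hn with hn | hn
      · rw [hS, Finset.mem_Icc] at hn; omega
      · simp only [Finset.mem_image, hS, Finset.mem_Icc] at hn
        obtain ⟨j, hj, rfl⟩ := hn
        omega
    have hkcard : (k₀ : ℝ) ≤ 4 * S.card := by
      have : k₀ ≤ 4 * (k₀ - m - 1) := by omega
      calc (k₀ : ℝ) ≤ ((4 * (k₀ - m - 1) : ℕ) : ℝ) := by exact_mod_cast this
        _ = 4 * S.card := by rw [hcard]; push_cast; ring
    have hreal : (k₀ : ℝ) * a k₀ ≤ 4 * (K + 1) * ∑ n ∈ F, a n := by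
      rw [← hsplit]
      nlinarith [hsum, hak, hkcard]
    calc (k₀ : ℝ≥0∞) * ENNReal.ofReal (a k₀)
        = ENNReal.ofReal ((k₀ : ℝ) * a k₀) := by
          rw [ENNReal.ofReal_mul (by positivity), ENNReal.ofReal_natCast]
      _ ≤ ENNReal.ofReal (4 * (K + 1) * ∑ n ∈ F, a n) := ENNReal.ofReal_le_ofReal hreal
      _ = ENNReal.ofReal (4 * (K + 1)) * ENNReal.ofReal (∑ n ∈ F, a n) :=
          ENNReal.ofReal_mul h4K
      _ ≤ ENNReal.ofReal (4 * (K + 1)) * ∑' j : ℕ, ENNReal.ofReal (a (m + 1 + j)) := by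
          gcongr
          exact hT F hFmem
end

section
/- If {a_k} is a nonnegative sequence in NBVS and ∑_{k=1}^{∞} a_k < ∞, then sup_{k ≥ 2n+1} k·a_k ≤ K·∑_{k = n+1}^{∞} a_k for all n ≥ 1, where K depends only on the NBVS constant; in particular k·a_k → 0. -/
open Filter

private lemma telescope_bound (a : ℕ → ℝ) (m : ℕ) :
    ∀ k, m ≤ k → a k ≤ a m + ∑ j ∈ Finset.Ico m k, |a j - a (j + 1)| := by
  intro k hk
  induction k, hk using Nat.le_induction with
  | base => simp
  | succ k hk ih =>
    rw [Finset.sum_Ico_succ_top hk]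
    have h : a (k + 1) - a k ≤ |a k - a (k + 1)| := by
      rw [abs_sub_comm]; exact le_abs_self _
    linarith

private lemma finset_tail_bound (a : ℕ → ℝ) (hpos : ∀ n, 0 ≤ a n) (hsum : Summable a)
    (n : ℕ) (s : Finset ℕ) (hs : ∀ j ∈ s, n + 1 ≤ j) :
    ∑ j ∈ s, a j ≤ ∑' j : ℕ, a (n + 1 + j) := by
  have hf : Summable (fun j => a (n + 1 + j)) := by
    have h := (summable_nat_add_iff (n + 1)).2 hsum
    simpa [add_comm] using h
  have him : ∑ i ∈ s.image (· - (n + 1)), a (n + 1 + i) = ∑ j ∈ s, a j := by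
    rw [Finset.sum_image]
    · exact Finset.sum_congr rfl fun j hj => by
        congr 1; have := hs j hj; omega
    · intro x hx y hy hxy
      have := hs x hx; have := hs y hy; beta_reduce at hxy; omega
  rw [← him]
  exact Summable.sum_le_tsum _ (fun i _ => hpos _) hf

theorem nbvs_summable_decay (a : ℕ → ℝ) (hpos : ∀ n, 0 ≤ a n) (K : ℝ)
    (hNBVS : ∀ m : ℕ, 1 ≤ m →
      ∑ k ∈ Finset.Icc m (2 * m), |a k - a (k + 1)| ≤ K * (a m + a (2 * m)))
    (hsum : Summable a) :
    (∃ K' : ℝ, 0 < K' ∧ ∀ n : ℕ, 1 ≤ n → ∀ k : ℕ, 2 * n + 1 ≤ k →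
      (k : ℝ) * a k ≤ K' * ∑' j : ℕ, a (n + 1 + j)) ∧
    Tendsto (fun k : ℕ => (k : ℝ) * a k) atTop (nhds 0) := by
  set K₀ : ℝ := max K 1 with hK₀def
  have hK₀1 : (1 : ℝ) ≤ K₀ := le_max_right _ _
  have hK'pos : (0 : ℝ) < 4 * (1 + K₀) := by linarith
  have key : ∀ n : ℕ, 1 ≤ n → ∀ k : ℕ, 2 * n + 1 ≤ k →
      (k : ℝ) * a k ≤ (4 * (1 + K₀)) * ∑' j : ℕ, a (n + 1 + j) := by
    intro n hn k hk
    set T := ∑' j : ℕ, a (n + 1 + j) with hT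
    have hTnn : 0 ≤ T := tsum_nonneg fun _ => hpos _
    set m₀ := (k + 1) / 2 with hm₀
    set I := Finset.Icc m₀ k with hI
    have hIne : I.Nonempty := ⟨m₀, Finset.mem_Icc.2 ⟨le_refl _, by omega⟩⟩
    obtain ⟨m, hmI, hmin⟩ := I.exists_min_image (fun x => a x + a (2 * x)) hIne
    obtain ⟨hm₀m, hmk⟩ := Finset.mem_Icc.1 hmI
    have hg : 0 ≤ a m + a (2 * m) := by
      have := hpos m; have := hpos (2 * m); linarith
    -- variation bound: a k ≤ (1 + K₀) * (a m + a (2 * m))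
    have hak : a k ≤ (1 + K₀) * (a m + a (2 * m)) := by
      have h1 : a k ≤ a m + ∑ j ∈ Finset.Ico m k, |a j - a (j + 1)| :=
        telescope_bound a m k (by omega)
      have h2 : ∑ j ∈ Finset.Ico m k, |a j - a (j + 1)|
          ≤ ∑ j ∈ Finset.Icc m (2 * m), |a j - a (j + 1)| := by
        apply Finset.sum_le_sum_of_subset_of_nonneg
        · intro j hj
          rw [Finset.mem_Ico] at hj
          rw [Finset.mem_Icc]
          omega
        · intro j _ _; exact abs_nonneg _
      have h3 := hNBVS m (by omega)
      have h4 : K * (a m + a (2 * m)) ≤ K₀ * (a m + a (2 * m)) :=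
        mul_le_mul_of_nonneg_right (le_max_left _ _) hg
      have h5 : a m ≤ a m + a (2 * m) := by linarith [hpos (2 * m)]
      nlinarith
    have hcard : I.card = k / 2 + 1 := by
      rw [hI, Nat.card_Icc]; omega
    have hk2card : (k : ℝ) ≤ 2 * I.card := by
      have : k ≤ 2 * I.card := by omega
      exact_mod_cast this
    have hcs : (I.card : ℝ) * (a m + a (2 * m)) ≤ ∑ x ∈ I, (a x + a (2 * x)) := by
      have h := Finset.card_nsmul_le_sum I (fun x => a x + a (2 * x)) (a m + a (2 * m))
        (fun x hx => hmin x hx)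
      simpa [nsmul_eq_mul, mul_add] using h
    have hA : ∑ x ∈ I, a x ≤ T := by
      apply finset_tail_bound a hpos hsum
      intro j hj
      rw [hI, Finset.mem_Icc] at hj
      omega
    have hB : ∑ x ∈ I, a (2 * x) ≤ T := by
      have him : ∑ x ∈ I.image (fun x => 2 * x), a x = ∑ x ∈ I, a (2 * x) :=
        Finset.sum_image (by intro x _ y _ h; beta_reduce at h; omega)
      rw [← him]
      apply finset_tail_bound a hpos hsum
      intro j hj
      rw [Finset.mem_image] at hj
      obtain ⟨x, hx, rfl⟩ := hj
      rw [hI, Finset.mem_Icc] at hx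
      omega
    have hsplit : ∑ x ∈ I, (a x + a (2 * x)) = ∑ x ∈ I, a x + ∑ x ∈ I, a (2 * x) :=
      Finset.sum_add_distrib
    have s1 : (k : ℝ) * a k ≤ (k : ℝ) * ((1 + K₀) * (a m + a (2 * m))) :=
      mul_le_mul_of_nonneg_left hak (Nat.cast_nonneg k)
    have s2 : (1 + K₀) * ((k : ℝ) * (a m + a (2 * m)))
        ≤ (1 + K₀) * (2 * I.card * (a m + a (2 * m))) := by
      apply mul_le_mul_of_nonneg_left _ (by linarith)
      exact mul_le_mul_of_nonneg_right hk2card hg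
    have s3 : (1 + K₀) * (2 * ((I.card : ℝ) * (a m + a (2 * m))))
        ≤ (1 + K₀) * (2 * (2 * T)) := by
      apply mul_le_mul_of_nonneg_left _ (by linarith)
      have : (I.card : ℝ) * (a m + a (2 * m)) ≤ 2 * T := by linarith
      linarith
    nlinarith [s1, s2, s3]
  have htail : Tendsto (fun n : ℕ => ∑' j : ℕ, a (n + 1 + j)) atTop (nhds 0) := by
    have h := (tendsto_sum_nat_add a).comp (tendsto_add_atTop_nat 1)
    have heq : ((fun i => ∑' k, a (k + i)) ∘ fun n => n + 1)
        = fun n : ℕ => ∑' j : ℕ, a (n + 1 + j) := by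
      funext n
      simp only [Function.comp]
      exact tsum_congr fun j => by rw [add_comm]
    rwa [heq] at h
  constructor
  · exact ⟨4 * (1 + K₀), hK'pos, key⟩
  · rw [Metric.tendsto_atTop]
    intro ε hε
    obtain ⟨N, hN⟩ := (Metric.tendsto_atTop.1 htail) (ε / (4 * (1 + K₀)))
      (div_pos hε hK'pos)
    refine ⟨2 * max N 1 + 1, fun k hk => ?_⟩
    set n := max N 1 with hn
    have h1 := hN n (le_max_left _ _)
    rw [Real.dist_eq, sub_zero, abs_of_nonneg (tsum_nonneg fun _ => hpos _)] at h1
    have h2 := key n (le_max_right _ _) k hk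
    have h3 : (4 * (1 + K₀)) * (∑' j : ℕ, a (n + 1 + j)) < ε := by
      have := mul_lt_mul_of_pos_left h1 hK'pos
      rwa [mul_div_cancel₀ _ (ne_of_gt hK'pos)] at this
    rw [Real.dist_eq, sub_zero, abs_of_nonneg (mul_nonneg (Nat.cast_nonneg k) (hpos k))]
    linarith
end
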